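/- arXiv:math-ph/9809022 — 6 statements merged into one kernel-verified Lean document; each statement's English description precedes it below -/
import Mathlib

section
/- Let k, l ∈ ℕ with k + l = 2n and l − k ≡ 2 (mod 4), let κ : Cl_{k,l} → ⋀V be the canonical linear isomorphism onto the exterior algebra of V = ℝ^{2n}, and define the Hodge–Kähler duality operator ⋆ on ⋀V by ⋆κ(a) = κ(η a). Then ⋆ maps the middle exterior power ⋀ⁿV into itself, and ⋆(⋆ω) = −ω for every ω ∈ ⋀ⁿV; thus ⋆ defines a complex structure on the real vector space ⋀ⁿV. -/
open CliffordAlgebra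

namespace HodgeAux

variable {N : ℕ} (Q : QuadraticForm ℝ (Fin N → ℝ))

noncomputable def eV (i : Fin N) : Fin N → ℝ := Pi.single i 1

noncomputable def cP (L : List (Fin N)) : CliffordAlgebra Q :=
  (L.map fun i => ι Q (eV i)).prod

noncomputable def wP (L : List (Fin N)) : ExteriorAlgebra ℝ (Fin N → ℝ) :=
  (L.map fun i => ExteriorAlgebra.ι ℝ (eV i)).prod

@[simp] lemma cP_nil : cP Q ([] : List (Fin N)) = 1 := rfl

@[simp] lemma cP_cons (a : Fin N) (L : List (Fin N)) :
    cP Q (a :: L) = ι Q (eV a) * cP Q L := by simp [cP]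

@[simp] lemma wP_nil : wP ([] : List (Fin N)) = 1 := rfl

@[simp] lemma wP_cons (a : Fin N) (L : List (Fin N)) :
    wP (a :: L) = ExteriorAlgebra.ι ℝ (eV a) * wP L := by simp [wP]

variable {Q}
variable (horth : ∀ i j : Fin N, i ≠ j → Q.IsOrtho (eV i) (eV j))

include horth in
lemma move_past {i : Fin N} : ∀ L : List (Fin N), i ∉ L →
    ι Q (eV i) * cP Q L = ((-1 : ℝ) ^ L.length) • (cP Q L * ι Q (eV i)) := by
  intro L
  induction L with
  | nil => simp
  | cons a T ih =>
    intro hi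
    have hia : i ≠ a := fun h => hi (h ▸ List.mem_cons_self (a := a) (l := T))
    have hiT : i ∉ T := fun h => hi (List.mem_cons_of_mem a h)
    rw [cP_cons, CliffordAlgebra.ι_mul_ι_mul_of_isOrtho _ (horth i a hia), ih hiT]
    simp only [List.length_cons, pow_succ, mul_smul_comm, mul_assoc]
    module

include horth in
lemma cP_mul_self : ∀ L : List (Fin N), L.Nodup →
    cP Q L * cP Q L
      = (((-1 : ℝ) ^ (L.length.choose 2)) * (L.map fun i => Q (eV i)).prod) • 1 := by
  intro L
  induction L with
  | nil => simp
  | cons a T ih =>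
    intro hnd
    have haT : a ∉ T := (List.nodup_cons.mp hnd).1
    have hT : T.Nodup := (List.nodup_cons.mp hnd).2
    have hmv : cP Q T * ι Q (eV a) = ((-1 : ℝ) ^ T.length) • (ι Q (eV a) * cP Q T) := by
      rw [move_past horth T haT, smul_smul, ← pow_add]
      rw [← two_mul, pow_mul, neg_one_sq, one_pow, one_smul]
    calc ι Q (eV a) * cP Q T * (ι Q (eV a) * cP Q T)
        = ι Q (eV a) * (cP Q T * ι Q (eV a)) * cP Q T := by simp only [mul_assoc]
      _ = ((-1 : ℝ) ^ T.length) • (ι Q (eV a) * ι Q (eV a) * (cP Q T * cP Q T)) := by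
          rw [hmv]; simp only [mul_smul_comm, smul_mul_assoc, mul_assoc]
      _ = ((-1 : ℝ) ^ T.length) • ((Q (eV a)) • (cP Q T * cP Q T)) := by
          rw [CliffordAlgebra.ι_sq_scalar, ← Algebra.smul_def]
      _ = _ := by
          rw [ih hT, List.map_cons, List.prod_cons, List.length_cons]
          have hch : (T.length + 1).choose 2 = T.length + T.length.choose 2 := by
            rw [Nat.choose_succ_succ, Nat.choose_one_right]
          rw [hch, pow_add]
          simp only [smul_smul]
          ring_nf

include horth in
lemma ι_mul_cP (i : Fin N) : ∀ L : List (Fin N), L.Nodup →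
    ∃ (r : ℝ) (M : List (Fin N)), M.Nodup ∧
      ι Q (eV i) * cP Q L = r • cP Q M ∧
      ∀ j, j ∈ M ↔ ((j ∈ L) ↔ j ≠ i) := by
  intro L
  induction L with
  | nil =>
    intro _
    refine ⟨1, [i], List.nodup_singleton i, by simp, fun j => ?_⟩
    simp only [List.mem_singleton, List.not_mem_nil]
    by_cases h : j = i <;> simp [h]
  | cons a T ih =>
    intro hnd
    have haT : a ∉ T := (List.nodup_cons.mp hnd).1
    have hT : T.Nodup := (List.nodup_cons.mp hnd).2
    by_cases hai : a = i
    · subst hai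
      refine ⟨Q (eV a), T, hT, ?_, fun j => ?_⟩
      · rw [cP_cons, ← mul_assoc, CliffordAlgebra.ι_sq_scalar, ← Algebra.smul_def]
      · by_cases h : j = a
        · subst h; simp [haT]
        · simp [List.mem_cons, h]
    · obtain ⟨r, M, hM, heq, hmem⟩ := ih hT
      have haM : a ∉ M := by
        rw [hmem a]
        simp [haT, Ne.symm, hai]
      refine ⟨-r, a :: M, List.nodup_cons.mpr ⟨haM, hM⟩, ?_, fun j => ?_⟩
      · rw [cP_cons, CliffordAlgebra.ι_mul_ι_mul_of_isOrtho _ (horth i a (fun h => hai h.symm)),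
          heq, cP_cons]
        simp only [mul_smul_comm, neg_smul]
      · by_cases h : j = a
        · subst h; simp [List.mem_cons, hai]
        · simp only [List.mem_cons, h, false_or, hmem j]

include horth in
lemma cP_mul_cP (L2 : List (Fin N)) (hL2 : L2.Nodup) : ∀ L1 : List (Fin N), L1.Nodup →
    ∃ (r : ℝ) (M : List (Fin N)), M.Nodup ∧
      cP Q L1 * cP Q L2 = r • cP Q M ∧
      ∀ j, j ∈ M ↔ ¬((j ∈ L1) ↔ (j ∈ L2)) := by
  intro L1
  induction L1 with
  | nil =>
    intro _
    exact ⟨1, L2, hL2, by simp, fun j => by simp⟩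
  | cons a T ih =>
    intro hnd
    have haT : a ∉ T := (List.nodup_cons.mp hnd).1
    have hT : T.Nodup := (List.nodup_cons.mp hnd).2
    obtain ⟨r, M, hM, heq, hmem⟩ := ih hT
    obtain ⟨r', M', hM', heq', hmem'⟩ := ι_mul_cP horth a M hM
    refine ⟨r * r', M', hM', ?_, fun j => ?_⟩
    · rw [cP_cons, mul_assoc, heq, mul_smul_comm, heq', smul_smul]
    · rw [hmem' j]
      by_cases h : j = a
      · subst h
        simp only [hmem j, List.mem_cons, haT]
        tauto
      · simp only [hmem j, List.mem_cons, h, false_or]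
        tauto

lemma contract_wP (d : Module.Dual ℝ (Fin N → ℝ)) :
    ∀ L : List (Fin N), (∀ j ∈ L, d (eV j) = 0) →
      CliffordAlgebra.contractLeft (Q := (0 : QuadraticForm ℝ (Fin N → ℝ))) d (wP L) = 0 := by
  intro L
  induction L with
  | nil =>
    intro _
    simpa using CliffordAlgebra.contractLeft_one (Q := (0 : QuadraticForm ℝ (Fin N → ℝ))) (d := d)
  | cons a T ih =>
    intro hd
    rw [wP_cons, CliffordAlgebra.contractLeft_ι_mul, hd a (List.mem_cons_self (a := a) (l := T)),
      ih (fun j hj => hd j (List.mem_cons_of_mem a hj))]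
    simp

include horth in
lemma equivExterior_cP : ∀ L : List (Fin N), L.Nodup →
    CliffordAlgebra.equivExterior Q (cP Q L) = wP L := by
  intro L
  induction L with
  | nil =>
    intro _
    simp only [cP_nil, wP_nil, CliffordAlgebra.equivExterior, CliffordAlgebra.changeFormEquiv_apply]
    exact CliffordAlgebra.changeForm_one _
  | cons a T ih =>
    intro hnd
    have haT : a ∉ T := (List.nodup_cons.mp hnd).1
    have hT : T.Nodup := (List.nodup_cons.mp hnd).2
    have ihT := ih hT
    simp only [CliffordAlgebra.equivExterior, CliffordAlgebra.changeFormEquiv_apply] at ihT ⊢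
    rw [cP_cons, CliffordAlgebra.changeForm_ι_mul, ihT, wP_cons,
      contract_wP _ T ?_, sub_zero]
    intro j hj
    have hja : a ≠ j := fun h => haT (h ▸ hj)
    have := (horth a j hja)
    rw [QuadraticMap.associated_apply]
    have hzero : (-Q) (eV a + eV j) - (-Q) (eV a) - (-Q) (eV j) = 0 := by
      rw [QuadraticMap.IsOrtho] at this
      simp only [QuadraticMap.neg_apply, this]
      ring
    rw [hzero, smul_zero]

lemma wP_eq_ιMulti (L : List (Fin N)) :
    wP L = ExteriorAlgebra.ιMulti ℝ L.length (fun j => eV (L.get j)) := by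
  rw [ExteriorAlgebra.ιMulti_apply, wP]
  conv_lhs => rw [← List.ofFn_get L]
  rw [List.map_ofFn]
  rfl

lemma wP_mem (L : List (Fin N)) : wP L ∈ ⋀[ℝ]^(L.length) (Fin N → ℝ) := by
  rw [wP_eq_ιMulti]
  exact ExteriorAlgebra.ιMulti_range ℝ L.length (Set.mem_range_self _)

lemma middle_le_span (n : ℕ) :
    ⋀[ℝ]^n (Fin N → ℝ) ≤ Submodule.span ℝ
      {x | ∃ L : List (Fin N), L.Nodup ∧ L.length = n ∧ wP L = x} := by
  rw [← ExteriorAlgebra.ιMulti_span_fixedDegree]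
  rw [Submodule.span_le]
  rintro x ⟨v, rfl⟩
  have hv : ∀ i : Fin n, v i = ∑ j : Fin N, v i j • eV j := by
    intro i
    funext t
    simp [eV, Pi.single_apply, Finset.sum_ite_eq]
  have hexp : (ExteriorAlgebra.ιMulti ℝ n) v
      = ∑ r : Fin n → Fin N, (∏ i, v i (r i)) • ExteriorAlgebra.ιMulti ℝ n (fun i => eV (r i)) := by
    conv_lhs => rw [show v = fun i => ∑ j : Fin N, v i j • eV j from funext hv]
    rw [← AlternatingMap.coe_multilinearMap, MultilinearMap.map_sum]
    refine Finset.sum_congr rfl fun r _ => ?_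
    rw [MultilinearMap.map_smul_univ]
  rw [hexp]
  refine Submodule.sum_mem _ fun r _ => Submodule.smul_mem _ _ ?_
  by_cases hr : Function.Injective r
  · refine Submodule.subset_span ⟨List.ofFn r, List.nodup_ofFn.mpr hr, by simp, ?_⟩
    rw [wP_eq_ιMulti]
    have hlen : (List.ofFn r).length = n := List.length_ofFn
    rw [ExteriorAlgebra.ιMulti_apply, ExteriorAlgebra.ιMulti_apply]
    rw [← List.ofFn_get (List.ofFn r)]
    simp [List.get_ofFn]
  · rw [Function.not_injective_iff] at hr
    obtain ⟨i, j, hij, hne⟩ := hr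
    have : (ExteriorAlgebra.ιMulti ℝ n) (fun i => eV (r i)) = 0 :=
      AlternatingMap.map_eq_zero_of_eq _ _ (by rw [hij]) hne
    rw [this]
    exact Submodule.zero_mem _

end HodgeAux

/-- Let `k + l = 2n` with `l − k ≡ 2 (mod 4)`, let
`κ : Cl_{k,l} ≃ ⋀V` be the canonical linear isomorphism onto the exterior algebra of
`V = ℝ^{2n}` and define the Hodge–Kähler duality `⋆ω = κ (η · κ⁻¹ ω)` where `η` is the
volume element.  Then `⋆` maps the middle exterior power `⋀ⁿV` to itself and
`⋆(⋆ω) = −ω` there; hence `⋆` is a complex structure on `⋀ⁿV`. -/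
theorem hodge_star_complex_structure_middle_power
    (k l n : ℕ) (hkl : k + l = 2 * n) (hmod : ((l : ℤ) - k) % 4 = 2)
    (Q : QuadraticForm ℝ (Fin (k + l) → ℝ))
    (hQ : Q = QuadraticMap.weightedSumSquares ℝ
      (fun i : Fin (k + l) => if (i : ℕ) < k then (1 : ℝ) else -1))
    (η : CliffordAlgebra Q)
    (hη : η = (List.ofFn fun i : Fin (k + l) =>
      CliffordAlgebra.ι Q (Pi.single i 1)).prod)
    (κ : CliffordAlgebra Q ≃ₗ[ℝ] ExteriorAlgebra ℝ (Fin (k + l) → ℝ))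
    (hκ : κ = CliffordAlgebra.equivExterior Q)
    (star : ExteriorAlgebra ℝ (Fin (k + l) → ℝ) → ExteriorAlgebra ℝ (Fin (k + l) → ℝ))
    (hstar : ∀ ω, star ω = κ (η * κ.symm ω)) :
    (∀ ω ∈ ⋀[ℝ]^n (Fin (k + l) → ℝ), star ω ∈ ⋀[ℝ]^n (Fin (k + l) → ℝ)) ∧
    (∀ ω ∈ ⋀[ℝ]^n (Fin (k + l) → ℝ), star (star ω) = -ω) := by
  open HodgeAux in
  -- orthogonality of the standard basis
  have hcross : ∀ (i j : Fin (k+l)), i ≠ j → ∀ m,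
      (eV i m + eV j m) * (eV i m + eV j m) = eV i m * eV i m + eV j m * eV j m := by
    intro i j hij m
    simp only [eV, Pi.single_apply]
    by_cases hmi : m = i <;> by_cases hmj : m = j
    · exact absurd (hmi.symm.trans hmj) hij
    · subst hmi; simp [hmj, hij]
    · subst hmj; simp [hmi, Ne.symm hij]
    · simp [hmi, hmj]
  have horth : ∀ i j : Fin (k+l), i ≠ j → Q.IsOrtho (eV i) (eV j) := by
    intro i j hij
    rw [QuadraticMap.isOrtho_def, hQ]
    simp only [QuadraticMap.weightedSumSquares_apply, ← Finset.sum_add_distrib]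
    refine Finset.sum_congr rfl fun m _ => ?_
    rw [Pi.add_apply, hcross i j hij m, smul_add]
  have hQe : ∀ i : Fin (k+l), Q (eV i) = if (i : ℕ) < k then (1:ℝ) else -1 := by
    intro i
    rw [hQ, QuadraticMap.weightedSumSquares_apply, Finset.sum_eq_single i]
    · simp [eV, Pi.single_apply]
    · intro m _ hmi; simp [eV, Pi.single_apply, hmi]
    · simp
  -- the volume element as a product over the full index list
  set full : List (Fin (k+l)) := List.ofFn (fun i => i) with hfulldef
  have hfull_nd : full.Nodup := List.nodup_ofFn.mpr (fun a b h => h)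
  have hfull_len : full.length = k + l := List.length_ofFn
  have hfull_mem : ∀ j : Fin (k+l), j ∈ full := by
    intro j; rw [hfulldef, List.mem_ofFn]; exact ⟨j, rfl⟩
  have hη' : η = cP Q full := by
    rw [hη]
    simp only [cP, hfulldef, List.map_ofFn]
    rfl
  -- η² = -1
  have hprod : ((full.map fun i => Q (eV i)).prod : ℝ) = (-1 : ℝ) ^ l := by
    have hstep : ∏ i : Fin (k+l), ((fun i => Q (eV i)) ∘ fun i => i) i
        = ∏ i : Fin (k+l), (if (i:ℕ) < k then (1:ℝ) else -1) :=
      Finset.prod_congr rfl (fun i _ => by simpa using hQe i)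
    rw [hfulldef, List.map_ofFn, List.prod_ofFn, hstep, Fin.prod_univ_add]
    have h1 : ∀ i : Fin k, (if ((Fin.castAdd l i : Fin (k+l)) : ℕ) < k then (1:ℝ) else -1) = 1 := by
      intro i; rw [if_pos]; exact i.isLt
    have h2 : ∀ i : Fin l, (if ((Fin.natAdd k i : Fin (k+l)) : ℕ) < k then (1:ℝ) else -1) = -1 := by
      intro i; rw [if_neg]; simp
    rw [Finset.prod_congr rfl (fun i _ => h1 i), Finset.prod_congr rfl (fun i _ => h2 i)]
    simp
  have hch : (k + l).choose 2 = n * (2 * n - 1) := by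
    rw [hkl, Nat.choose_two_right,
      show 2*n*(2*n-1) = 2*(n*(2*n-1)) by ring, Nat.mul_div_cancel_left _ (by norm_num)]
  have hnl : Odd (n + l) := by rw [Nat.odd_iff]; omega
  have hoddc : Odd ((k+l).choose 2 + l) := by
    rw [hch]
    rcases n with _ | m
    · simpa using hnl
    · have h2m : (2 * (m+1) - 1) % 2 = 1 := by omega
      have := Nat.mul_mod (m+1) (2*(m+1)-1) 2
      rw [Nat.odd_iff] at hnl ⊢
      rw [Nat.add_mod, this, h2m]
      omega
  have hηsq : η * η = (-1 : ℝ) • (1 : CliffordAlgebra Q) := by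
    rw [hη', cP_mul_self horth full hfull_nd, hprod, hfull_len, ← pow_add,
      Odd.neg_one_pow hoddc]
  constructor
  · -- star maps the middle power to itself
    intro ω hω
    have hspan := middle_le_span (N := k+l) n hω
    rw [hstar]
    refine Submodule.span_induction
      (p := fun x _ => κ (η * κ.symm x) ∈ ⋀[ℝ]^n (Fin (k+l) → ℝ)) ?_ ?_ ?_ ?_ hspan
    · rintro x ⟨L, hnd, hlen, rfl⟩
      have hsymm : κ.symm (wP L) = cP Q L := by
        rw [LinearEquiv.symm_apply_eq, hκ, equivExterior_cP horth L hnd]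
      rw [hsymm, hη']
      obtain ⟨r, M, hM, heq, hmem⟩ := cP_mul_cP horth L hnd full hfull_nd
      rw [heq, map_smul]
      refine Submodule.smul_mem _ _ ?_
      have hMlen : M.length = n := by
        have h1 : M.toFinset.card = M.length := List.toFinset_card_of_nodup hM
        have h2 : M.toFinset = L.toFinsetᶜ := by
          ext j
          simp only [List.mem_toFinset, Finset.mem_compl, hmem j, hfull_mem j]
          tauto
        have h3 : L.toFinset.card = n := by rw [List.toFinset_card_of_nodup hnd, hlen]
        rw [h2, Finset.card_compl, h3, Fintype.card_fin] at h1
        omega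
      have hin := wP_mem (N := k+l) M
      rw [hMlen] at hin
      rw [hκ, equivExterior_cP horth M hM]
      exact hin
    · show κ (η * κ.symm 0) ∈ ⋀[ℝ]^n (Fin (k + l) → ℝ)
      rw [show κ.symm 0 = 0 from κ.symm.map_zero, mul_zero,
        show κ 0 = 0 from κ.map_zero]
      exact Submodule.zero_mem _
    · intro x y _ _ hx hy
      simp only [map_add, mul_add]
      exact Submodule.add_mem _ hx hy
    · intro c x _ hx
      simp only [map_smul, mul_smul_comm]
      exact Submodule.smul_mem _ _ hx
  · -- star ∘ star = -1
    intro ω _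
    rw [hstar, hstar, LinearEquiv.symm_apply_apply, ← mul_assoc, hηsq]
    rw [smul_mul_assoc, one_mul, map_smul, LinearEquiv.apply_symm_apply]
    simp
end

section
/- Let k, l ∈ ℕ with k + l = 2n + 1 and l − k ≡ 1 (mod 4), let κ : Cl_{k,l} → ⋀V be the canonical linear isomorphism onto the exterior algebra of V = ℝ^{2n+1}, and define ⋆ on ⋀V by ⋆κ(a) = κ(η a). Then ⋆ maps the subspace ⋀ⁿV ⊕ ⋀^{n+1}V into itself, and ⋆(⋆ω) = −ω for every ω ∈ ⋀ⁿV ⊕ ⋀^{n+1}V; thus ⋆ defines a complex structure on the real vector space ⋀ⁿV ⊕ ⋀^{n+1}V. -/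
open CliffordAlgebra

namespace HodgeStarAux

variable {R : Type*} [CommRing R] {M : Type*} [AddCommGroup M] [Module R M]
variable {ι' : Type*}

/-- product of Clifford generators along a list of indices -/
def cP (Q : QuadraticForm R M) (f : ι' → M) (L : List ι') : CliffordAlgebra Q :=
  (L.map fun i => ι Q (f i)).prod

@[simp] lemma cP_nil (Q : QuadraticForm R M) (f : ι' → M) : cP Q f [] = 1 := rfl

@[simp] lemma cP_cons (Q : QuadraticForm R M) (f : ι' → M) (i : ι') (L : List ι') :
    cP Q f (i :: L) = ι Q (f i) * cP Q f L := by
  simp [cP]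

lemma contractLeft_cP_eq_zero {Q : QuadraticForm R M} (d : Module.Dual R M)
    (f : ι' → M) (L : List ι') (h : ∀ j ∈ L, d (f j) = 0) :
    contractLeft (Q := Q) d (cP Q f L) = 0 := by
  induction L with
  | nil => simpa using contractLeft_one Q d
  | cons i T ih =>
      rw [cP_cons, contractLeft_ι_mul, ih (fun j hj => h j (List.mem_cons_of_mem _ hj)),
        h i List.mem_cons_self]
      simp

lemma changeForm_cP {Q Q' : QuadraticForm R M} {B : LinearMap.BilinForm R M}
    (h : B.toQuadraticMap = Q' - Q) (f : ι' → M)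
    (hB : ∀ i j, i ≠ j → B (f i) (f j) = 0) (L : List ι') (hL : L.Nodup) :
    changeForm h (cP Q f L) = cP Q' f L := by
  induction L with
  | nil => simpa using changeForm_one h
  | cons i T ih =>
      rw [cP_cons, changeForm_ι_mul, ih hL.of_cons, cP_cons,
        contractLeft_cP_eq_zero _ f T (fun j hj => hB i j (by rintro rfl; exact hL.notMem hj)),
        sub_zero]

lemma cP_perm {Q : QuadraticForm R M} (f : ι' → M)
    (hf : ∀ i j, i ≠ j → ι Q (f i) * ι Q (f j) = -(ι Q (f j) * ι Q (f i)))
    {L L' : List ι'} (h : L.Perm L') :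
    ∃ r : R, cP Q f L = r • cP Q f L' := by
  induction h with
  | nil => exact ⟨1, by simp⟩
  | cons x _ ih =>
      obtain ⟨r, hr⟩ := ih
      exact ⟨r, by rw [cP_cons, hr, cP_cons, mul_smul_comm]⟩
  | swap x y T =>
      rcases eq_or_ne y x with rfl | hxy
      · exact ⟨1, by simp⟩
      · refine ⟨-1, ?_⟩
        rw [cP_cons, cP_cons, ← mul_assoc, hf y x hxy, cP_cons, cP_cons, ← mul_assoc]
        simp
  | trans _ _ ih1 ih2 =>
      obtain ⟨r, hr⟩ := ih1
      obtain ⟨r', hr'⟩ := ih2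
      exact ⟨r * r', by rw [hr, hr', smul_smul]⟩

variable [DecidableEq ι'] [LinearOrder ι']

/-- product of Clifford generators along a finset of indices, in sorted order -/
def cF (Q : QuadraticForm R M) (f : ι' → M) (S : Finset ι') : CliffordAlgebra Q :=
  cP Q f (S.sort (· ≤ ·))

lemma ι_mul_cF {Q : QuadraticForm R M} (f : ι' → M)
    (hf : ∀ i j, i ≠ j → ι Q (f i) * ι Q (f j) = -(ι Q (f j) * ι Q (f i)))
    (i : ι') (S : Finset ι') :
    ∃ r : R, ι Q (f i) * cF Q f S = r • cF Q f (symmDiff S {i}) := by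
  classical
  by_cases hi : i ∈ S
  · have hperm : (S.sort (· ≤ ·)).Perm (i :: (S.erase i).sort (· ≤ ·)) := by
      refine List.perm_of_nodup_nodup_toFinset_eq (Finset.sort_nodup _ _) ?_ ?_
      · exact List.nodup_cons.2 ⟨by simp, Finset.sort_nodup _ _⟩
      · simp [Finset.sort_toFinset, Finset.insert_erase hi]
    obtain ⟨r, hr⟩ := cP_perm f hf hperm
    have hsd : symmDiff S {i} = S.erase i := by
      ext t
      rcases eq_or_ne t i with rfl | h
      · simp [Finset.mem_symmDiff, hi]
      · simp [Finset.mem_symmDiff, h]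
    refine ⟨r * Q (f i), ?_⟩
    rw [hsd, cF, hr, cP_cons, mul_smul_comm, ← mul_assoc, ι_sq_scalar,
      ← Algebra.smul_def, smul_smul, cF]
  · have hperm : (i :: S.sort (· ≤ ·)).Perm ((insert i S).sort (· ≤ ·)) := by
      refine List.perm_of_nodup_nodup_toFinset_eq ?_ (Finset.sort_nodup _ _) ?_
      · exact List.nodup_cons.2 ⟨by simpa using hi, Finset.sort_nodup _ _⟩
      · simp [Finset.sort_toFinset]
    obtain ⟨r, hr⟩ := cP_perm f hf hperm
    have hsd : symmDiff S {i} = insert i S := by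
      ext t
      rcases eq_or_ne t i with rfl | h
      · simp [Finset.mem_symmDiff, hi]
      · simp [Finset.mem_symmDiff, h]
    refine ⟨r, ?_⟩
    rw [hsd, cF, cF, ← hr, cP_cons]

lemma cP_mul_cF {Q : QuadraticForm R M} (f : ι' → M)
    (hf : ∀ i j, i ≠ j → ι Q (f i) * ι Q (f j) = -(ι Q (f j) * ι Q (f i)))
    (L : List ι') (hL : L.Nodup) (S : Finset ι') :
    ∃ r : R, cP Q f L * cF Q f S = r • cF Q f (symmDiff S L.toFinset) := by
  classical
  induction L generalizing S with
  | nil =>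
      refine ⟨1, ?_⟩
      have h0 : symmDiff S (([] : List ι').toFinset) = S := by
        ext t; simp [Finset.mem_symmDiff]
      rw [h0]; simp
  | cons i T ih =>
      obtain ⟨hiT, hT⟩ := List.nodup_cons.mp hL
      obtain ⟨r, hr⟩ := ih hT S
      obtain ⟨r', hr'⟩ := ι_mul_cF f hf i (symmDiff S T.toFinset)
      refine ⟨r * r', ?_⟩
      have hins : (insert i T.toFinset : Finset ι') = symmDiff T.toFinset {i} := by
        ext t
        rcases eq_or_ne t i with rfl | h
        · simp [Finset.mem_symmDiff, hiT]
        · simp [Finset.mem_symmDiff, h]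
      rw [cP_cons, mul_assoc, hr, mul_smul_comm, hr', List.toFinset_cons, hins,
        ← symmDiff_assoc, smul_smul]


def stdBasis (m : ℕ) (i : Fin m) : Fin m → ℝ := Pi.single i 1

lemma prod_mul_of_anticomm {A : Type*} [Ring A] (x : A) (L : List A)
    (h : ∀ y ∈ L, x * y = -(y * x)) :
    L.prod * x = (-1 : ℤ) ^ L.length • (x * L.prod) := by
  induction L with
  | nil => simp
  | cons a T ih =>
      have ha : a * x = -(x * a) := by rw [h a List.mem_cons_self, neg_neg]
      rw [List.prod_cons, mul_assoc, ih (fun y hy => h y (List.mem_cons_of_mem _ hy)),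
        mul_smul_comm, ← mul_assoc, ha, List.length_cons, pow_succ, mul_comm ((-1:ℤ)^T.length),
        mul_smul, neg_one_smul, neg_mul, smul_neg, mul_assoc]

lemma prod_sq_of_anticomm {A : Type*} [Ring A] (L : List A)
    (h : L.Pairwise fun a b => a * b = -(b * a)) :
    L.prod * L.prod = (-1 : ℤ) ^ (L.length.choose 2) • (L.map fun a => a * a).prod := by
  induction L with
  | nil => simp
  | cons x T ih =>
      rw [List.pairwise_cons] at h
      rw [List.prod_cons, mul_assoc, ← mul_assoc T.prod x, prod_mul_of_anticomm x T h.1,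
        smul_mul_assoc, mul_smul_comm, mul_assoc, ← mul_assoc x x, ih h.2, mul_smul_comm,
        smul_smul, List.map_cons, List.prod_cons, List.length_cons]
      congr 1
      rw [Nat.choose_succ_succ, Nat.choose_one_right, pow_add, mul_comm]


end HodgeStarAux

set_option maxHeartbeats 2000000 in
open HodgeStarAux CliffordAlgebra in
/-- Let `k + l = 2n + 1` with `l − k ≡ 1 (mod 4)`, let
`κ : Cl_{k,l} ≃ ⋀V` be the canonical linear isomorphism onto the exterior algebra of
`V = ℝ^{2n+1}` and define `⋆ω = κ (η · κ⁻¹ ω)` where `η` is the volume element.  Then `⋆`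
maps `⋀ⁿV ⊕ ⋀^{n+1}V` to itself and `⋆(⋆ω) = −ω` there; hence `⋆` is a complex structure
on the real vector space `⋀ⁿV ⊕ ⋀^{n+1}V`. -/
theorem hodge_star_complex_structure_odd_dim
    (k l n : ℕ) (hkl : k + l = 2 * n + 1) (hmod : ((l : ℤ) - k) % 4 = 1)
    (Q : QuadraticForm ℝ (Fin (k + l) → ℝ))
    (hQ : Q = QuadraticMap.weightedSumSquares ℝ
      (fun i : Fin (k + l) => if (i : ℕ) < k then (1 : ℝ) else -1))
    (η : CliffordAlgebra Q)
    (hη : η = (List.ofFn fun i : Fin (k + l) =>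
      CliffordAlgebra.ι Q (Pi.single i 1)).prod)
    (κ : CliffordAlgebra Q ≃ₗ[ℝ] ExteriorAlgebra ℝ (Fin (k + l) → ℝ))
    (hκ : κ = CliffordAlgebra.equivExterior Q)
    (star : ExteriorAlgebra ℝ (Fin (k + l) → ℝ) → ExteriorAlgebra ℝ (Fin (k + l) → ℝ))
    (hstar : ∀ ω, star ω = κ (η * κ.symm ω)) :
    (∀ ω ∈ ⋀[ℝ]^n (Fin (k + l) → ℝ) ⊔ ⋀[ℝ]^(n + 1) (Fin (k + l) → ℝ),
        star ω ∈ ⋀[ℝ]^n (Fin (k + l) → ℝ) ⊔ ⋀[ℝ]^(n + 1) (Fin (k + l) → ℝ)) ∧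
    (∀ ω ∈ ⋀[ℝ]^n (Fin (k + l) → ℝ) ⊔ ⋀[ℝ]^(n + 1) (Fin (k + l) → ℝ),
        star (star ω) = -ω) := by
  classical
  set E := stdBasis (k + l) with hE
  -- values of Q on the basis
  have hQE : ∀ i : Fin (k + l), Q (E i) = if (i : ℕ) < k then (1 : ℝ) else -1 := by
    intro i
    rw [hQ, QuadraticMap.weightedSumSquares_apply]
    rw [Finset.sum_eq_single i]
    · simp [hE, stdBasis]
    · intro j _ hji
      have : E i j = 0 := by simp [hE, stdBasis, Pi.single_apply, hji.symm]
      simp [this]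
    · simp
  -- orthogonality
  have hortho : ∀ i j : Fin (k + l), i ≠ j → Q.IsOrtho (E i) (E j) := by
    intro i j hij
    rw [QuadraticMap.isOrtho_def, hQ, QuadraticMap.weightedSumSquares_apply,
      QuadraticMap.weightedSumSquares_apply, QuadraticMap.weightedSumSquares_apply,
      ← Finset.sum_add_distrib]
    refine Finset.sum_congr rfl fun t _ => ?_
    have hit : E i t = if i = t then 1 else 0 := by
      simp [hE, stdBasis, Pi.single_apply, eq_comm]
    have hjt : E j t = if j = t then 1 else 0 := by
      simp [hE, stdBasis, Pi.single_apply, eq_comm]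
    simp only [Pi.add_apply, hit, hjt, smul_eq_mul]
    rcases eq_or_ne i t with rfl | hi
    · rw [if_pos rfl, if_neg (fun h : j = i => hij h.symm)]
      ring
    · rw [if_neg hi]
      rcases eq_or_ne j t with rfl | hj
      · rw [if_pos rfl]; ring
      · rw [if_neg hj]; ring
  have hanti : ∀ i j : Fin (k + l), i ≠ j →
      ι Q (E i) * ι Q (E j) = -(ι Q (E j) * ι Q (E i)) :=
    fun i j hij => ι_mul_ι_comm_of_isOrtho (hortho i j hij)
  -- the bilinear form of the contraction vanishes on distinct basis vectors
  have hB : ∀ i j : Fin (k + l), i ≠ j →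
      (QuadraticMap.associated (R := ℝ) (-Q)) (E i) (E j) = 0 := by
    intro i j hij
    rw [QuadraticMap.associated_apply]
    have h1 : (-Q) (E i + E j) - (-Q) (E i) - (-Q) (E j) = 0 := by
      have := (hortho i j hij)
      rw [QuadraticMap.isOrtho_def] at this
      simp only [QuadraticMap.neg_apply, this]
      ring
    rw [h1, smul_zero]
  -- κ sends basis Clifford products to basis wedges
  have hκcP : ∀ L : List (Fin (k + l)), L.Nodup →
      κ (cP Q E L) = cP (0 : QuadraticForm ℝ (Fin (k + l) → ℝ)) E L := by
    intro L hL
    rw [hκ]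
    exact changeForm_cP changeForm.associated_neg_proof E hB L hL
  have hηc : η = cP Q E (List.finRange (k + l)) := by
    rw [hη, List.ofFn_eq_map]; rfl
  -- the key grading property
  have key : ∀ (p : ℕ) (x : ExteriorAlgebra ℝ (Fin (k + l) → ℝ)),
      x ∈ ⋀[ℝ]^p (Fin (k + l) → ℝ) →
      κ (η * κ.symm x) ∈ ⋀[ℝ]^(k + l - p) (Fin (k + l) → ℝ) := by
    intro p x hx
    rw [← ExteriorAlgebra.ιMulti_span_fixedDegree] at hx
    induction hx using Submodule.span_induction with
    | mem u hu =>
        obtain ⟨v, rfl⟩ := hu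
        -- expand in the standard basis
        have hexp : ExteriorAlgebra.ιMulti ℝ p v
            = ∑ g : Fin p → Fin (k + l), (∏ i, v i (g i)) •
                ExteriorAlgebra.ιMulti ℝ p (fun i => E (g i)) := by
          have hv : v = fun i => ∑ j, v i j • E j := by
            funext i t
            simp [hE, stdBasis, Pi.single_apply, eq_comm]
          conv_lhs => rw [hv]
          rw [show ExteriorAlgebra.ιMulti ℝ p (M := Fin (k + l) → ℝ)
                (fun i => ∑ j, v i j • E j)
              = (ExteriorAlgebra.ιMulti ℝ p).toMultilinearMap
                (fun i => ∑ j, v i j • E j) from rfl,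
            MultilinearMap.map_sum]
          refine Finset.sum_congr rfl fun g _ => ?_
          exact MultilinearMap.map_smul_univ _ _ _
        rw [hexp, map_sum, Finset.mul_sum, map_sum]
        refine Submodule.sum_mem _ fun g _ => ?_
        rw [map_smul, mul_smul_comm, map_smul]
        refine Submodule.smul_mem _ _ ?_
        by_cases hg : Function.Injective g
        · -- the wedge of distinct basis vectors
          have hL : (List.ofFn g).Nodup := List.nodup_ofFn.mpr hg
          have h1 : ExteriorAlgebra.ιMulti ℝ p (fun i => E (g i))
              = cP (0 : QuadraticForm ℝ (Fin (k + l) → ℝ)) E (List.ofFn g) := by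
            rw [ExteriorAlgebra.ιMulti_apply, cP, List.map_ofFn]
            rfl
          have h2 : κ.symm (ExteriorAlgebra.ιMulti ℝ p (fun i => E (g i)))
              = cP Q E (List.ofFn g) := by
            rw [h1, LinearEquiv.symm_apply_eq, hκcP _ hL]
          set S : Finset (Fin (k + l)) := (List.ofFn g).toFinset with hS
          have hperm : (List.ofFn g).Perm (S.sort (· ≤ ·)) :=
            List.perm_of_nodup_nodup_toFinset_eq hL (Finset.sort_nodup _ _)
              (by rw [Finset.sort_toFinset])
          obtain ⟨r, hr⟩ := cP_perm E hanti hperm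
          rw [show cP Q E (S.sort (· ≤ ·)) = cF Q E S from rfl] at hr
          obtain ⟨r', hr'⟩ := cP_mul_cF E hanti (List.finRange (k + l))
            (List.nodup_finRange _) S
          have hcompl : symmDiff S (List.finRange (k + l)).toFinset = Sᶜ := by
            rw [List.toFinset_finRange, show (Finset.univ : Finset (Fin (k + l)))
              = (⊤ : Finset (Fin (k + l))) from rfl, symmDiff_top, hnot_eq_compl]
          have h3 : κ (η * κ.symm (ExteriorAlgebra.ιMulti ℝ p (fun i => E (g i))))
              = (r * r') • κ (cF Q E Sᶜ) := by
            rw [h2, hηc, hr, mul_smul_comm, hr', hcompl, smul_smul, map_smul]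
          rw [h3]
          refine Submodule.smul_mem _ _ ?_
          -- κ of the sorted complement product is a wedge of basis vectors
          have h4 : κ (cF Q E Sᶜ)
              = cP (0 : QuadraticForm ℝ (Fin (k + l) → ℝ)) E (Sᶜ.sort (· ≤ ·)) :=
            hκcP _ (Finset.sort_nodup _ _)
          rw [h4]
          set L2 : List (Fin (k + l)) := Sᶜ.sort (· ≤ ·) with hL2
          have h5 : cP (0 : QuadraticForm ℝ (Fin (k + l) → ℝ)) E L2
              = ExteriorAlgebra.ιMulti ℝ L2.length (fun i => E (L2.get i)) := by
            rw [ExteriorAlgebra.ιMulti_apply, cP]; exact congrArg List.prod (List.ofFn_getElem_eq_map _ _).symm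
          have h6 : L2.length = k + l - p := by
            rw [hL2, Finset.length_sort, Finset.card_compl, Fintype.card_fin, hS,
              List.toFinset_card_of_nodup hL, List.length_ofFn]
          rw [h5, ← h6]
          exact ExteriorAlgebra.ιMulti_range ℝ L2.length ⟨_, rfl⟩
        · have hg' : ¬ Function.Injective (fun i => E (g i)) := by
            intro hcomp
            exact hg fun a b hab => hcomp (by simp [hab])
          rw [AlternatingMap.map_eq_zero_of_not_injective _ _ hg', LinearEquiv.map_zero,
            mul_zero, LinearEquiv.map_zero]
          exact Submodule.zero_mem _
    | zero =>
        rw [LinearEquiv.map_zero, mul_zero, LinearEquiv.map_zero]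
        exact Submodule.zero_mem _
    | add a b _ _ ha hb =>
        rw [map_add, mul_add, map_add]
        exact Submodule.add_mem _ ha hb
    | smul r a _ ha =>
        rw [map_smul, mul_smul_comm, map_smul]
        exact Submodule.smul_mem _ _ ha
  -- η squares to -1
  have hηη : η * η = -1 := by
    have hpair : (List.map (fun i => ι Q (E i)) (List.finRange (k + l))).Pairwise
        (fun a b => a * b = -(b * a)) := by
      rw [List.pairwise_map]
      exact (List.nodup_finRange _).imp (fun {a b} hab => hanti a b hab)
    have hsq := prod_sq_of_anticomm _ hpair
    have hlen : (List.map (fun i => ι Q (E i)) (List.finRange (k + l))).length = k + l := by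
      simp
    have hmap : ((List.map (fun i => ι Q (E i)) (List.finRange (k + l))).map
        fun a => a * a).prod = algebraMap ℝ (CliffordAlgebra Q) ((-1 : ℝ) ^ l) := by
      rw [List.map_map]
      have hfun : ((fun a => a * a) ∘ fun i => ι Q (E i))
          = fun i : Fin (k + l) => algebraMap ℝ (CliffordAlgebra Q)
            (if (i : ℕ) < k then (1 : ℝ) else -1) := by
        funext i
        simp only [Function.comp_apply, ι_sq_scalar, hQE i]
      rw [hfun, ← List.ofFn_eq_map,
        show (List.ofFn fun i : Fin (k + l) => algebraMap ℝ (CliffordAlgebra Q)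
            (if (i : ℕ) < k then (1 : ℝ) else -1))
          = (List.ofFn fun i : Fin (k + l) => (if (i : ℕ) < k then (1 : ℝ) else -1)).map
            (algebraMap ℝ (CliffordAlgebra Q)) from (List.map_ofFn).symm,
        ← map_list_prod]
      congr 1
      rw [List.prod_ofFn, Fin.prod_univ_add]
      have h1 : (∏ i : Fin k,
          (if ((Fin.castAdd l i : Fin (k + l)) : ℕ) < k then (1 : ℝ) else -1)) = 1 :=
        Finset.prod_eq_one fun i _ => if_pos (by simpa using i.isLt)
      have h2 : (∏ i : Fin l,
          (if ((Fin.natAdd k i : Fin (k + l)) : ℕ) < k then (1 : ℝ) else -1)) = (-1 : ℝ) ^ l := by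
        rw [Finset.prod_congr rfl (fun (i : Fin l) _ => if_neg (by simp)),
          Finset.prod_const, Finset.card_univ, Fintype.card_fin]
      rw [h1, h2, one_mul]
    have hodd : Odd ((k + l).choose 2 + l) := by
      have hc : (k + l).choose 2 = 2 * (n * n) + n := by
        rw [hkl, Nat.choose_two_right]
        have h3 : (2 * n + 1) * (2 * n + 1 - 1) = (2 * (n * n) + n) * 2 := by
          rw [show 2 * n + 1 - 1 = 2 * n from rfl]; ring
        rw [h3, Nat.mul_div_cancel _ (by norm_num)]
      rw [hc, Nat.odd_iff]
      obtain ⟨m2, hm2⟩ : ∃ m2, n * n = m2 := ⟨_, rfl⟩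
      rw [hm2]
      omega
    have hη2 : η * η = (-1 : ℤ) ^ ((k + l).choose 2) •
        algebraMap ℝ (CliffordAlgebra Q) ((-1 : ℝ) ^ l) := by
      rw [hηc, show cP Q E (List.finRange (k + l))
          = (List.map (fun i => ι Q (E i)) (List.finRange (k + l))).prod from rfl,
        hsq, hlen, hmap]
    rw [hη2, ← Int.cast_smul_eq_zsmul ℝ,
      show (((-1 : ℤ) ^ ((k + l).choose 2) : ℤ) : ℝ) = (-1 : ℝ) ^ ((k + l).choose 2) by push_cast; ring,
      Algebra.smul_def, ← map_mul, ← pow_add, Odd.neg_one_pow hodd, map_neg, map_one]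
  constructor
  · intro ω hω
    rw [Submodule.mem_sup] at hω
    obtain ⟨x, hx, y, hy, rfl⟩ := hω
    rw [hstar, map_add κ.symm, mul_add, map_add]
    have h1 := key n x hx
    have h2 := key (n + 1) y hy
    rw [show k + l - n = n + 1 by omega] at h1
    rw [show k + l - (n + 1) = n by omega] at h2
    exact Submodule.add_mem _ (Submodule.mem_sup_right h1) (Submodule.mem_sup_left h2)
  · intro ω _
    rw [hstar, hstar, LinearEquiv.symm_apply_apply, ← mul_assoc, hηη, neg_one_mul,
      ← neg_one_smul ℝ (κ.symm ω), LinearEquiv.map_smul, LinearEquiv.apply_symm_apply,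
      neg_one_smul]
end

section
/- (Proposition 1, first identity.) Let k + l = 2n and let B : S → S* be an intertwiner for the irreducible representation γ of Cl_{k,l} on the space S of Dirac spinors, i.e. a ℂ-linear isomorphism with ⟨B(γ_μ s), t⟩ = ⟨B s, γ_μ t⟩ for all s, t ∈ S and all μ. Then B is symmetric or antisymmetric according to the sign (−1)^{n(n−1)/2}: for all s, t ∈ S, ⟨B s, t⟩ = (−1)^{n(n−1)/2} ⟨B t, s⟩. -/
namespace IntertwinerAux

open Module

variable {S : Type*} [AddCommGroup S] [Module ℂ S] {m : ℕ}

noncomputable def Pl (γ : Fin m → Module.End ℂ S) (L : List (Fin m)) : Module.End ℂ S :=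
  (L.map γ).prod

noncomputable def Gf (γ : Fin m → Module.End ℂ S) (A : Finset (Fin m)) : Module.End ℂ S :=
  Pl γ (A.sort (· ≤ ·))

variable {γ : Fin m → Module.End ℂ S}

lemma Pl_nil : Pl γ [] = 1 := rfl

lemma Pl_cons {i : Fin m} {L : List (Fin m)} : Pl γ (i :: L) = γ i * Pl γ L := by
  simp [Pl]

lemma Pl_append {L₁ L₂ : List (Fin m)} : Pl γ (L₁ ++ L₂) = Pl γ L₁ * Pl γ L₂ := by
  simp [Pl]

lemma Gf_empty : Gf γ (∅ : Finset (Fin m)) = 1 := by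
  simp [Gf, Finset.sort_empty, Pl_nil]

lemma Gf_singleton {a : Fin m} : Gf γ ({a} : Finset (Fin m)) = γ a := by
  simp [Gf, Finset.sort_singleton, Pl, Pl_cons]

lemma pass (hanti : ∀ i j : Fin m, i ≠ j → γ i * γ j = -(γ j * γ i))
    (i : Fin m) (L : List (Fin m)) (h : ∀ j ∈ L, j ≠ i) :
    γ i * Pl γ L = ((-1 : ℂ) ^ L.length) • (Pl γ L * γ i) := by
  induction L with
  | nil => simp [Pl_nil]
  | cons a L ih =>
    have ha : a ≠ i := h a (by simp)
    have hL : ∀ j ∈ L, j ≠ i := fun j hj => h j (by simp [hj])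
    rw [Pl_cons, ← mul_assoc, hanti i a (Ne.symm ha), neg_mul, mul_assoc, ih hL,
      mul_smul_comm, List.length_cons, pow_succ, mul_comm _ (-1 : ℂ), mul_smul, neg_smul,
      one_smul, mul_assoc]

lemma pass' (hanti : ∀ i j : Fin m, i ≠ j → γ i * γ j = -(γ j * γ i))
    (i : Fin m) (L : List (Fin m)) (h : ∀ j ∈ L, j ≠ i) :
    Pl γ L * γ i = ((-1 : ℂ) ^ L.length) • (γ i * Pl γ L) := by
  rw [pass hanti i L h, smul_smul, ← pow_add, ← two_mul, pow_mul, neg_one_sq, one_pow,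
    one_smul]

lemma Gf_insert {a : Fin m} {A : Finset (Fin m)} (h : ∀ b ∈ A, a < b) (ha : a ∉ A) :
    Gf γ (insert a A) = γ a * Gf γ A := by
  rw [Gf, Finset.sort_insert _ (fun b hb => (h b hb).le) ha, Pl_cons, Gf]

lemma symmDiff_single_mem {a : Fin m} {A : Finset (Fin m)} (ha : a ∈ A) :
    symmDiff ({a} : Finset (Fin m)) A = A.erase a := by
  ext b
  simp only [Finset.mem_symmDiff, Finset.mem_singleton, Finset.mem_erase]
  constructor
  · rintro (⟨rfl, hb⟩ | ⟨hb, hb'⟩)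
    · exact absurd ha hb
    · exact ⟨hb', hb⟩
  · rintro ⟨hb, hb'⟩; exact Or.inr ⟨hb', hb⟩

lemma symmDiff_single_not_mem {a : Fin m} {A : Finset (Fin m)} (ha : a ∉ A) :
    symmDiff ({a} : Finset (Fin m)) A = insert a A := by
  ext b
  simp only [Finset.mem_symmDiff, Finset.mem_singleton, Finset.mem_insert]
  constructor
  · rintro (⟨rfl, hb⟩ | ⟨hb, hb'⟩)
    · exact Or.inl rfl
    · exact Or.inr hb
  · rintro (rfl | hb)
    · exact Or.inl ⟨rfl, ha⟩
    · exact Or.inr ⟨hb, fun h => ha (h ▸ hb)⟩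

lemma insert_symmDiff_single {a i : Fin m} {A : Finset (Fin m)} (hia : i ≠ a) :
    insert a (symmDiff ({i} : Finset (Fin m)) A) = symmDiff ({i} : Finset (Fin m)) (insert a A) := by
  ext b
  simp only [Finset.mem_insert, Finset.mem_symmDiff, Finset.mem_singleton]
  constructor
  · rintro (rfl | ⟨rfl, hb⟩ | ⟨hb, hb'⟩)
    · exact Or.inr ⟨Or.inl rfl, fun h => hia (h.symm ▸ rfl)⟩
    · exact Or.inl ⟨rfl, fun h => hb (h.resolve_left hia)⟩
    · exact Or.inr ⟨Or.inr hb, hb'⟩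
  · rintro (⟨rfl, hb⟩ | ⟨(rfl | hb), hb'⟩)
    · exact Or.inr (Or.inl ⟨rfl, fun h => hb (Or.inr h)⟩)
    · exact Or.inl rfl
    · exact Or.inr (Or.inr ⟨hb, hb'⟩)

lemma gamma_mul_Gf (hanti : ∀ i j : Fin m, i ≠ j → γ i * γ j = -(γ j * γ i))
    (ee : Fin m → ℂ) (hsq : ∀ i, γ i * γ i = ee i • 1) (hee : ∀ i, ee i = 1 ∨ ee i = -1)
    (A : Finset (Fin m)) :
    ∀ i : Fin m, ∃ ε : ℂ, (ε = 1 ∨ ε = -1) ∧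
      γ i * Gf γ A = ε • Gf γ (symmDiff ({i} : Finset (Fin m)) A) := by
  induction A using Finset.strongInduction with
  | _ A ih =>
    intro i
    rcases A.eq_empty_or_nonempty with rfl | hA
    · refine ⟨1, Or.inl rfl, ?_⟩
      simp [Gf_empty, symmDiff_single_not_mem (Finset.notMem_empty i), Gf_singleton]
    · set a := A.min' hA with ha_def
      have haA : a ∈ A := A.min'_mem hA
      have hins : insert a (A.erase a) = A := Finset.insert_erase haA
      have hlt : ∀ b ∈ A.erase a, a < b := by
        intro b hb
        rcases Finset.mem_erase.mp hb with ⟨hne, hbA⟩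
        exact lt_of_le_of_ne (A.min'_le b hbA) (Ne.symm hne)
      have hnot : a ∉ A.erase a := Finset.notMem_erase a A
      have hGA : Gf γ A = γ a * Gf γ (A.erase a) := by
        conv_lhs => rw [← hins]
        exact Gf_insert hlt hnot
      rcases lt_trichotomy i a with hia | rfl | hia
      · -- i < a, so i ∉ A
        have hiA : i ∉ A := fun h => absurd (A.min'_le i h) (not_le.mpr hia)
        refine ⟨1, Or.inl rfl, ?_⟩
        rw [symmDiff_single_not_mem hiA, one_smul,
          Gf_insert (fun b hb => lt_of_lt_of_le hia (A.min'_le b hb)) hiA]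
      · -- i = a
        refine ⟨ee a, hee a, ?_⟩
        rw [hGA, ← mul_assoc, hsq a, symmDiff_single_mem haA, smul_mul_assoc, one_mul]
      · -- a < i
        obtain ⟨ε, hε, hmul⟩ := ih (A.erase a) (Finset.erase_ssubset haA) i
        have hne : i ≠ a := ne_of_gt hia
        have hlt' : ∀ b ∈ symmDiff ({i} : Finset (Fin m)) (A.erase a), a < b := by
          intro b hb
          rcases Finset.mem_symmDiff.mp hb with ⟨hb1, _⟩ | ⟨hb1, _⟩
          · rwa [Finset.mem_singleton.mp hb1]
          · exact hlt b hb1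
        have hnot' : a ∉ symmDiff ({i} : Finset (Fin m)) (A.erase a) := fun h =>
          lt_irrefl a (hlt' a h)
        refine ⟨-ε, by rcases hε with h | h <;> simp [h], ?_⟩
        rw [hGA, ← mul_assoc, hanti i a hne, neg_mul, mul_assoc, hmul, mul_smul_comm,
          ← Gf_insert hlt' hnot', neg_smul, ← smul_neg, ← neg_smul]
        rw [insert_symmDiff_single hne, hins, smul_neg, neg_smul]

lemma Pl_mul_Gf (hanti : ∀ i j : Fin m, i ≠ j → γ i * γ j = -(γ j * γ i))
    (ee : Fin m → ℂ) (hsq : ∀ i, γ i * γ i = ee i • 1) (hee : ∀ i, ee i = 1 ∨ ee i = -1)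
    (L : List (Fin m)) (B : Finset (Fin m)) :
    ∃ ε : ℂ, (ε = 1 ∨ ε = -1) ∧
      Pl γ L * Gf γ B = ε • Gf γ (L.foldr (fun i C => symmDiff ({i} : Finset (Fin m)) C) B) := by
  induction L with
  | nil => exact ⟨1, Or.inl rfl, by simp [Pl_nil]⟩
  | cons a L ih =>
    obtain ⟨ε, hε, h⟩ := ih
    obtain ⟨ε', hε', h'⟩ := gamma_mul_Gf hanti ee hsq hee
      (L.foldr (fun i C => symmDiff ({i} : Finset (Fin m)) C) B) a
    refine ⟨ε' * ε, by rcases hε with h1 | h1 <;> rcases hε' with h2 | h2 <;>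
      simp [h1, h2], ?_⟩
    rw [Pl_cons, mul_assoc, h, mul_smul_comm, h', smul_smul, List.foldr_cons, mul_comm ε ε']

lemma foldr_symmDiff (B : Finset (Fin m)) :
    ∀ (L : List (Fin m)), L.Nodup →
      L.foldr (fun i C => symmDiff ({i} : Finset (Fin m)) C) B = symmDiff L.toFinset B := by
  intro L
  induction L with
  | nil => simp [symmDiff]
  | cons a L ih =>
    intro hnd
    rcases List.nodup_cons.mp hnd with ⟨ha, hnd'⟩
    rw [List.foldr_cons, ih hnd', List.toFinset_cons, ← symmDiff_assoc,
      symmDiff_single_not_mem (by simpa using ha)]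

lemma Gf_mul_Gf (hanti : ∀ i j : Fin m, i ≠ j → γ i * γ j = -(γ j * γ i))
    (ee : Fin m → ℂ) (hsq : ∀ i, γ i * γ i = ee i • 1) (hee : ∀ i, ee i = 1 ∨ ee i = -1)
    (A B : Finset (Fin m)) :
    ∃ ε : ℂ, (ε = 1 ∨ ε = -1) ∧ Gf γ A * Gf γ B = ε • Gf γ (symmDiff A B) := by
  obtain ⟨ε, hε, h⟩ := Pl_mul_Gf hanti ee hsq hee (A.sort (· ≤ ·)) B
  refine ⟨ε, hε, ?_⟩
  rw [Gf, h, foldr_symmDiff _ _ (A.sort_nodup (· ≤ ·)), Finset.sort_toFinset]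

lemma comm_not_mem (hanti : ∀ i j : Fin m, i ≠ j → γ i * γ j = -(γ j * γ i))
    {i : Fin m} {A : Finset (Fin m)} (hi : i ∉ A) :
    γ i * Gf γ A = ((-1 : ℂ) ^ A.card) • (Gf γ A * γ i) := by
  rw [Gf, ← Finset.length_sort (· ≤ ·) (s := A)]
  exact pass hanti i _ (fun j hj => fun h => hi (h ▸ (Finset.mem_sort _).mp hj))

lemma comm_mem (hanti : ∀ i j : Fin m, i ≠ j → γ i * γ j = -(γ j * γ i))
    (ee : Fin m → ℂ) (hsq : ∀ i, γ i * γ i = ee i • 1)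
    {i : Fin m} {A : Finset (Fin m)} (hi : i ∈ A) :
    γ i * Gf γ A = ((-1 : ℂ) ^ (A.card - 1)) • (Gf γ A * γ i) := by
  have hiL : i ∈ A.sort (· ≤ ·) := (Finset.mem_sort _).mpr hi
  obtain ⟨L₁, L₂, hL⟩ := List.append_of_mem hiL
  have hnd : (A.sort (· ≤ ·)).Nodup := A.sort_nodup (· ≤ ·)
  rw [hL] at hnd
  have h1 : ∀ j ∈ L₁, j ≠ i := by
    intro j hj
    have := (List.nodup_append'.mp hnd).2.2
    intro h; subst h
    exact this hj (by simp)
  have h2 : ∀ j ∈ L₂, j ≠ i := by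
    intro j hj
    have := List.nodup_cons.mp (List.nodup_append.mp hnd).2.1
    intro h; subst h
    exact this.1 hj
  have hcard : A.card = L₁.length + L₂.length + 1 := by
    rw [← Finset.length_sort (· ≤ ·) (s := A), hL]
    simp [List.length_append]
    omega
  have hGf : Gf γ A = Pl γ L₁ * (γ i * Pl γ L₂) := by
    rw [Gf, hL, Pl_append, Pl_cons]
  have key : ((-1 : ℂ) ^ L₂.length) * ((-1 : ℂ) ^ L₂.length) = 1 := by
    rw [← pow_add, ← two_mul, pow_mul, neg_one_sq, one_pow]
  have hl : γ i * Gf γ A = (((-1 : ℂ) ^ L₁.length) * ee i) • (Pl γ L₁ * Pl γ L₂) := by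
    rw [hGf, ← mul_assoc, pass hanti i L₁ h1, smul_mul_assoc, mul_assoc, ← mul_assoc (γ i),
      hsq i, smul_mul_assoc, one_mul, mul_smul_comm, smul_smul]
  have hr : Gf γ A * γ i = (((-1 : ℂ) ^ L₂.length) * ee i) • (Pl γ L₁ * Pl γ L₂) := by
    rw [hGf, mul_assoc, mul_assoc, pass' hanti i L₂ h2, mul_smul_comm, mul_smul_comm,
      ← mul_assoc (γ i), hsq i, smul_mul_assoc, one_mul, mul_smul_comm, smul_smul]
  rw [hl, hr, smul_smul]
  congr 1
  have hc1 : A.card - 1 = L₁.length + L₂.length := by omega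
  rw [hc1, pow_add]
  linear_combination (-((-1:ℂ)^(L₁.length)) * ee i) * key

lemma trace_Gf_eq_zero [FiniteDimensional ℂ S]
    (hanti : ∀ i j : Fin m, i ≠ j → γ i * γ j = -(γ j * γ i))
    (ee : Fin m → ℂ) (hsq : ∀ i, γ i * γ i = ee i • 1) (hee : ∀ i, ee i = 1 ∨ ee i = -1)
    (hm : Even m) {A : Finset (Fin m)} (hA : A.Nonempty) :
    LinearMap.trace ℂ S (Gf γ A) = 0 := by
  have : ∃ i : Fin m, γ i * Gf γ A = -(Gf γ A * γ i) := by
    by_cases hpar : Even A.card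
    · obtain ⟨i, hi⟩ := hA
      refine ⟨i, ?_⟩
      rw [comm_mem hanti ee hsq hi, Odd.neg_one_pow ?_, neg_smul, one_smul]
      exact Nat.Even.sub_odd (Nat.one_le_iff_ne_zero.mpr (Finset.card_ne_zero_of_mem hi))
        hpar odd_one
    · have hne : A ≠ Finset.univ := by
        intro h
        rw [h, Finset.card_univ, Fintype.card_fin] at hpar
        exact hpar hm
      obtain ⟨i, hiu, hi⟩ := Finset.exists_of_ssubset (Finset.ssubset_univ_iff.mpr hne)
      refine ⟨i, ?_⟩
      rw [comm_not_mem hanti hi, Odd.neg_one_pow (Nat.odd_iff.mpr ?_), neg_smul, one_smul]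
      rcases Nat.even_or_odd A.card with h | h
      · exact absurd h hpar
      · exact Nat.odd_iff.mp h
  obtain ⟨i, hcomm⟩ := this
  have h1 : γ i * Gf γ A * γ i = -(ee i • Gf γ A) := by
    rw [hcomm, neg_mul, mul_assoc, hsq i, mul_smul_comm, mul_one]
  have h2 : LinearMap.trace ℂ S (γ i * Gf γ A * γ i) = ee i * LinearMap.trace ℂ S (Gf γ A) := by
    rw [LinearMap.trace_mul_comm ℂ (γ i * Gf γ A) (γ i), ← mul_assoc, hsq i, smul_mul_assoc,
      one_mul, map_smul, smul_eq_mul]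
  rw [h1, map_neg, map_smul, smul_eq_mul] at h2
  have hee' : ee i ≠ 0 := by rcases hee i with h | h <;> simp [h]
  have h3 : ee i * LinearMap.trace ℂ S (Gf γ A) = 0 := by linear_combination (-1/2 : ℂ) * h2
  rcases mul_eq_zero.mp h3 with h | h
  · exact absurd h hee'
  · exact h

lemma Pl_reverse (hanti : ∀ i j : Fin m, i ≠ j → γ i * γ j = -(γ j * γ i))
    (L : List (Fin m)) (hnd : L.Nodup) :
    Pl γ L.reverse = ((-1 : ℂ) ^ (L.length * (L.length - 1) / 2)) • Pl γ L := by
  induction L with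
  | nil => simp [Pl_nil]
  | cons a L ih =>
    rcases List.nodup_cons.mp hnd with ⟨ha, hnd'⟩
    have hPa : Pl γ [a] = γ a := by rw [Pl_cons, Pl_nil, mul_one]
    rw [List.reverse_cons, Pl_append, hPa, ih hnd', smul_mul_assoc,
      pass' hanti a L (fun j hj h => ha (h ▸ hj)), smul_smul, ← pow_add,
      List.length_cons, Nat.triangle_succ, pow_add, Pl_cons]

lemma intertwine (B : S →ₗ[ℂ] Module.Dual ℂ S)
    (hBint : ∀ (i : Fin m) (s t : S), B (γ i s) t = B s (γ i t)) :
    ∀ (L : List (Fin m)) (s t : S), B (Pl γ L s) t = B s (Pl γ L.reverse t) := by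
  intro L
  induction L with
  | nil => intro s t; simp [Pl_nil, Module.End.one_apply]
  | cons a L ih =>
    intro s t
    have h1 : Pl γ (a :: L) s = γ a (Pl γ L s) := by
      rw [Pl_cons, Module.End.mul_apply]
    have h2 : Pl γ (a :: L).reverse t = Pl γ L.reverse (γ a t) := by
      rw [List.reverse_cons, Pl_append, Module.End.mul_apply, Pl_cons, Pl_nil, mul_one]
    rw [h1, hBint a (Pl γ L s) t, ih s (γ a t), h2]

lemma sign_pow_formula : ∀ p : ℕ, ((-1 : ℂ)) ^ (p * (p - 1) / 2)
    = ((1 - Complex.I) * Complex.I ^ p + (1 + Complex.I) * (-Complex.I) ^ p) / 2 := by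
  intro p
  induction p with
  | zero => norm_num
  | succ p ih =>
    rcases Nat.even_or_odd p with h | h
    · rw [Nat.triangle_succ, pow_add, ih, h.neg_one_pow, pow_succ, pow_succ, h.neg_pow, mul_one]
      linear_combination (Complex.I ^ p) * Complex.I_mul_I
    · rw [Nat.triangle_succ, pow_add, ih, h.neg_one_pow, pow_succ, pow_succ, h.neg_pow]
      ring

lemma sum_sign (n : ℕ) :
    ∑ A : Finset (Fin (2 * n)), ((-1 : ℂ)) ^ (A.card * (A.card - 1) / 2)
      = 2 ^ n * (-1 : ℂ) ^ (n * (n - 1) / 2) := by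
  classical
  have h1 : ∑ A : Finset (Fin (2 * n)), ((-1 : ℂ)) ^ (A.card * (A.card - 1) / 2)
      = ∑ p ∈ Finset.range (2 * n + 1),
          (((2 * n).choose p : ℂ)) * ((-1 : ℂ)) ^ (p * (p - 1) / 2) := by
    rw [← Finset.powerset_univ, Finset.sum_powerset, Finset.card_univ, Fintype.card_fin]
    refine Finset.sum_congr rfl fun p hp => ?_
    have : ∀ t ∈ Finset.powersetCard p (Finset.univ : Finset (Fin (2 * n))),
        ((-1 : ℂ)) ^ (t.card * (t.card - 1) / 2) = ((-1 : ℂ)) ^ (p * (p - 1) / 2) := by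
      intro t ht
      rw [(Finset.mem_powersetCard.mp ht).2]
    rw [Finset.sum_congr rfl this, Finset.sum_const, Finset.card_powersetCard,
      Finset.card_univ, Fintype.card_fin, nsmul_eq_mul]
  rw [h1]
  simp_rw [sign_pow_formula]
  have expand : ∀ p : ℕ, (((2 * n).choose p : ℂ)) *
      (((1 - Complex.I) * Complex.I ^ p + (1 + Complex.I) * (-Complex.I) ^ p) / 2)
      = (1 - Complex.I) / 2 * ((((2 * n).choose p : ℂ)) * Complex.I ^ p)
        + (1 + Complex.I) / 2 * ((((2 * n).choose p : ℂ)) * (-Complex.I) ^ p) := by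
    intro p; ring
  simp_rw [expand]
  rw [Finset.sum_add_distrib, ← Finset.mul_sum, ← Finset.mul_sum]
  have hb : ∀ x : ℂ, ∑ p ∈ Finset.range (2 * n + 1), (((2 * n).choose p : ℂ)) * x ^ p
      = (x + 1) ^ (2 * n) := by
    intro x
    rw [add_pow]
    refine Finset.sum_congr rfl fun p hp => ?_
    rw [one_pow, mul_one, mul_comm]
  rw [hb Complex.I, hb (-Complex.I)]
  have sq1 : (Complex.I + 1) ^ 2 = 2 * Complex.I := by
    linear_combination Complex.I_mul_I
  have sq2 : (-Complex.I + 1) ^ 2 = 2 * (-Complex.I) := by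
    linear_combination Complex.I_mul_I
  have e1 : (Complex.I + 1) ^ (2 * n) = 2 ^ n * Complex.I ^ n := by
    rw [pow_mul, sq1, mul_pow]
  have e2 : (-Complex.I + 1) ^ (2 * n) = 2 ^ n * (-Complex.I) ^ n := by
    rw [pow_mul, sq2, mul_pow]
  rw [e1, e2]
  ring

lemma trace_lflip [FiniteDimensional ℂ S] :
    LinearMap.trace ℂ (S →ₗ[ℂ] S →ₗ[ℂ] ℂ)
      ((LinearMap.lflip : (S →ₗ[ℂ] S →ₗ[ℂ] ℂ) ≃ₗ[ℂ] (S →ₗ[ℂ] S →ₗ[ℂ] ℂ)).toLinearMap)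
      = (Module.finrank ℂ S : ℂ) := by
  classical
  set b := Module.finBasis ℂ S with hb
  set e : (S →ₗ[ℂ] S →ₗ[ℂ] ℂ) ≃ₗ[ℂ] Matrix (Fin (Module.finrank ℂ S)) (Fin (Module.finrank ℂ S)) ℂ := LinearMap.toMatrix₂ b b with he
  set tmap : Matrix (Fin (Module.finrank ℂ S)) (Fin (Module.finrank ℂ S)) ℂ →ₗ[ℂ]
      Matrix (Fin (Module.finrank ℂ S)) (Fin (Module.finrank ℂ S)) ℂ :=
    { toFun := Matrix.transpose
      map_add' := fun _ _ => Matrix.transpose_add _ _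
      map_smul' := fun _ _ => Matrix.transpose_smul _ _ } with htmap
  have hconj : e.conj ((LinearMap.lflip : (S →ₗ[ℂ] S →ₗ[ℂ] ℂ) ≃ₗ[ℂ] (S →ₗ[ℂ] S →ₗ[ℂ] ℂ)).toLinearMap) = tmap := by
    apply LinearMap.ext; intro M
    apply Matrix.ext; intro i j
    rw [LinearEquiv.conj_apply]
    simp only [LinearMap.coe_comp, Function.comp_apply, LinearEquiv.coe_coe]
    rw [he, LinearMap.toMatrix₂_apply]
    have : (LinearMap.toMatrix₂ b b).symm M = Matrix.toLinearMap₂ b b M := by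
      rw [LinearMap.toMatrix₂_symm]
    rw [this]
    show (Matrix.toLinearMap₂ b b M) (b j) (b i) = M j i
    rw [Matrix.toLinearMap₂_apply]
    simp [Basis.repr_self, Finsupp.single_apply, Finset.sum_ite_eq, Finset.sum_ite_eq']
  have h1 : LinearMap.trace ℂ _
      ((LinearMap.lflip : (S →ₗ[ℂ] S →ₗ[ℂ] ℂ) ≃ₗ[ℂ] (S →ₗ[ℂ] S →ₗ[ℂ] ℂ)).toLinearMap)
      = LinearMap.trace ℂ _ tmap := by
    rw [← hconj, LinearMap.trace_conj']
  rw [h1, LinearMap.trace_eq_matrix_trace ℂ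
    (Matrix.stdBasis ℂ (Fin (Module.finrank ℂ S)) (Fin (Module.finrank ℂ S))), Matrix.trace]
  have hdiag : ∀ z : Fin (Module.finrank ℂ S) × Fin (Module.finrank ℂ S),
      (LinearMap.toMatrix (Matrix.stdBasis ℂ _ _) (Matrix.stdBasis ℂ _ _) tmap).diag z
        = if z.1 = z.2 then 1 else 0 := by
    rintro ⟨i, j⟩
    rw [Matrix.diag, LinearMap.toMatrix_apply, Matrix.stdBasis_eq_single]
    have ht : tmap (Matrix.single i j (1:ℂ)) = Matrix.single j i 1 := by
      show Matrix.transpose (Matrix.single i j (1:ℂ)) = Matrix.single j i 1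
      ext a c; simp [Matrix.single, Matrix.transpose_apply, and_comm]
    rw [ht, ← Matrix.stdBasis_eq_single ℂ j i, Basis.repr_self, Finsupp.single_apply]
    simp [Prod.ext_iff, eq_comm, and_self]
  rw [Finset.sum_congr rfl (fun z _ => hdiag z)]
  rw [Fintype.sum_prod_type]
  simp [Finset.sum_ite_eq]
end IntertwinerAux

/-- Proposition 1, first identity.  Let `k + l = 2n`, let
`γ᛫ : Fin (2n) → End ℂ S` give the irreducible representation of `Cl_{k,l}` on the
`2ⁿ`-dimensional complex space `S` of Dirac spinors, and let `B : S → S*` be an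
intertwiner, i.e. a ℂ-linear isomorphism with `⟨B (γ_μ s), t⟩ = ⟨B s, γ_μ t⟩`.  Then
`⟨B s, t⟩ = (−1)^{n(n−1)/2} ⟨B t, s⟩` for all `s, t ∈ S`. -/
theorem intertwiner_B_symmetry
    (k l n : ℕ) (hkl : k + l = 2 * n)
    (S : Type*) [AddCommGroup S] [Module ℂ S] [FiniteDimensional ℂ S]
    (hdim : Module.finrank ℂ S = 2 ^ n)
    (γ : Fin (2 * n) → Module.End ℂ S)
    (hCl : ∀ i j : Fin (2 * n), γ i * γ j + γ j * γ i =
      if i = j then ((if (i : ℕ) < k then (2 : ℂ) else (-2 : ℂ)) • 1) else 0)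
    (hirr : ∀ p : Submodule ℂ S, (∀ i : Fin (2 * n), ∀ x ∈ p, γ i x ∈ p) →
      p = ⊥ ∨ p = ⊤)
    (B : S →ₗ[ℂ] Module.Dual ℂ S) (hBbij : Function.Bijective B)
    (hBint : ∀ (i : Fin (2 * n)) (s t : S), B (γ i s) t = B s (γ i t)) :
    ∀ s t : S, B s t = (-1 : ℂ) ^ (n * (n - 1) / 2) * B t s := by
  classical
  -- anticommutation relations
  have hanti : ∀ i j : Fin (2 * n), i ≠ j → γ i * γ j = -(γ j * γ i) := by
    intro i j hij
    have h := hCl i j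
    rw [if_neg hij] at h
    exact eq_neg_of_add_eq_zero_left h
  -- squares
  set ee : Fin (2 * n) → ℂ := fun i => if (i : ℕ) < k then 1 else -1 with hee_def
  have hee1 : ∀ i, ee i = 1 ∨ ee i = -1 := by
    intro i; by_cases h : (i : ℕ) < k <;> simp [hee_def, h]
  have hsq : ∀ i, γ i * γ i = ee i • 1 := by
    intro i
    have h := hCl i i
    rw [if_pos rfl] at h
    have h2 : (2 : ℂ) • (γ i * γ i) = (2 : ℂ) • (ee i • (1 : Module.End ℂ S)) := by
      rw [two_smul, h, smul_smul]
      by_cases hik : (i : ℕ) < k <;> simp [hee_def, hik]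
    exact smul_right_injective _ (two_ne_zero) h2
  have hS : Nontrivial S :=
    Module.nontrivial_of_finrank_pos (by rw [hdim]; positivity)
  -- the Schur scalar
  set Be : S ≃ₗ[ℂ] Module.Dual ℂ S := LinearEquiv.ofBijective B hBbij with hBe
  set Cm : Module.End ℂ S := Be.symm.toLinearMap ∘ₗ B.flip with hCm
  have hCB : ∀ x : S, B (Cm x) = B.flip x := by
    intro x
    have : Be (Be.symm (B.flip x)) = B.flip x := Be.apply_symm_apply _
    simpa [hCm, hBe, LinearEquiv.ofBijective_apply] using this
  have hcommC : ∀ (i : Fin (2 * n)) (x : S), Cm (γ i x) = γ i (Cm x) := by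
    intro i x
    apply hBbij.1
    apply LinearMap.ext
    intro t
    rw [hCB]
    have e1 : B.flip (γ i x) t = B t (γ i x) := rfl
    have e2 : B (γ i (Cm x)) t = B (Cm x) (γ i t) := hBint i (Cm x) t
    rw [e1, e2]
    have e3 : B (Cm x) (γ i t) = B.flip x (γ i t) := by rw [hCB]
    rw [e3]
    exact (hBint i t x).symm
  obtain ⟨c, hc⟩ := Module.End.exists_eigenvalue Cm
  have hinv : ∀ i : Fin (2 * n), ∀ x ∈ Cm.eigenspace c, γ i x ∈ Cm.eigenspace c := by
    intro i x hx
    rw [Module.End.mem_eigenspace_iff] at hx ⊢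
    simp [hcommC i x, hx]
  have heig : Cm.eigenspace c = ⊤ := by
    rcases hirr (Cm.eigenspace c) hinv with h | h
    · exact absurd h (Module.End.hasEigenvalue_iff.mp hc)
    · exact h
  have hCx : ∀ x : S, Cm x = c • x := by
    intro x
    have hx : x ∈ Cm.eigenspace c := heig ▸ Submodule.mem_top
    exact Module.End.mem_eigenspace_iff.mp hx
  have hc' : ∀ s t : S, B t s = c * B s t := by
    intro s t
    have h1 : B (Cm s) t = B.flip s t := by rw [hCB]
    rw [hCx s, map_smul] at h1
    have h2 : c * B s t = B t s := h1
    exact h2.symm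
  -- linear independence of the products of gamma matrices
  have heven : Even (2 * n) := even_two_mul n
  have h2n : ((2 : ℂ)) ^ n ≠ 0 := pow_ne_zero n two_ne_zero
  have htr1 : LinearMap.trace ℂ S 1 = ((2 : ℂ)) ^ n := by
    rw [LinearMap.trace_one, hdim]
    push_cast
    ring
  have gind : LinearIndependent ℂ (fun A : Finset (Fin (2 * n)) => IntertwinerAux.Gf γ A) := by
    rw [Fintype.linearIndependent_iff]
    intro g hg A₀
    have h0 : (∑ A : Finset (Fin (2 * n)), g A • IntertwinerAux.Gf γ A) * IntertwinerAux.Gf γ A₀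
        = 0 := by rw [hg, zero_mul]
    rw [Finset.sum_mul] at h0
    have h0' := congrArg (LinearMap.trace ℂ S) h0
    rw [map_sum, map_zero] at h0'
    obtain ⟨ε, hε, hmul⟩ := IntertwinerAux.Gf_mul_Gf hanti ee hsq hee1 A₀ A₀
    have hdiag : symmDiff A₀ A₀ = (∅ : Finset (Fin (2 * n))) := by
      rw [symmDiff_self]
      rfl
    have hsum : ∀ A : Finset (Fin (2 * n)),
        LinearMap.trace ℂ S (g A • IntertwinerAux.Gf γ A * IntertwinerAux.Gf γ A₀)
          = if A = A₀ then g A₀ * (ε * 2 ^ n) else 0 := by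
      intro A
      by_cases hA : A = A₀
      · subst hA
        rw [if_pos rfl, smul_mul_assoc, hmul, hdiag, IntertwinerAux.Gf_empty, map_smul, map_smul,
          htr1, smul_eq_mul, smul_eq_mul]
      · rw [if_neg hA]
        obtain ⟨εA, hεA, hmulA⟩ := IntertwinerAux.Gf_mul_Gf hanti ee hsq hee1 A A₀
        have hne : (symmDiff A A₀).Nonempty := by
          rw [Finset.nonempty_iff_ne_empty]
          intro h
          exact hA (symmDiff_eq_bot.mp h)
        rw [smul_mul_assoc, hmulA, map_smul, map_smul,
          IntertwinerAux.trace_Gf_eq_zero hanti ee hsq hee1 heven hne, smul_zero, smul_zero]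
    rw [Finset.sum_congr rfl (fun A _ => hsum A), Finset.sum_ite_eq' Finset.univ A₀,
      if_pos (Finset.mem_univ A₀)] at h0'
    have hε0 : ε ≠ 0 := by rcases hε with h | h <;> simp [h]
    rcases mul_eq_zero.mp h0' with h | h
    · exact h
    · exact absurd h (mul_ne_zero hε0 h2n)
  -- transport to the space of bilinear-style maps
  set ar : (S →ₗ[ℂ] S) ≃ₗ[ℂ] (S →ₗ[ℂ] Module.Dual ℂ S) :=
    LinearEquiv.arrowCongr (LinearEquiv.refl ℂ S) Be with har
  set v : Finset (Fin (2 * n)) → (S →ₗ[ℂ] Module.Dual ℂ S) :=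
    fun A => B ∘ₗ (IntertwinerAux.Gf γ A : S →ₗ[ℂ] S) with hv_def
  have hv : ∀ A, v A = ar (IntertwinerAux.Gf γ A) := by
    intro A
    apply LinearMap.ext
    intro x
    simp [hv_def, har, LinearEquiv.arrowCongr_apply, hBe, LinearEquiv.ofBijective_apply]
  have vind : LinearIndependent ℂ v := by
    have h := gind.map' ar.toLinearMap (LinearEquiv.ker ar)
    have : (⇑ar.toLinearMap ∘ fun A : Finset (Fin (2 * n)) => IntertwinerAux.Gf γ A) = v := by
      funext A
      simp only [Function.comp_apply, LinearEquiv.coe_coe]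
      exact (hv A).symm
    rwa [this] at h
  have hcard : Fintype.card (Finset (Fin (2 * n)))
      = Module.finrank ℂ (S →ₗ[ℂ] Module.Dual ℂ S) := by
    rw [Fintype.card_finset, Fintype.card_fin, Module.finrank_linearMap,
      Subspace.dual_finrank_eq, hdim, two_mul, pow_add]
  set bb := basisOfLinearIndependentOfCardEqFinrank vind hcard with hbb_def
  have hbb : ⇑bb = v := coe_basisOfLinearIndependentOfCardEqFinrank vind hcard
  -- lflip acts diagonally in the basis v
  set T : (S →ₗ[ℂ] Module.Dual ℂ S) →ₗ[ℂ] (S →ₗ[ℂ] Module.Dual ℂ S) :=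
    ((LinearMap.lflip : (S →ₗ[ℂ] S →ₗ[ℂ] ℂ) ≃ₗ[ℂ] (S →ₗ[ℂ] S →ₗ[ℂ] ℂ)).toLinearMap) with hT_def
  have hT : ∀ A, T (v A) = (c * ((-1 : ℂ) ^ (A.card * (A.card - 1) / 2))) • v A := by
    intro A
    apply LinearMap.ext; intro s
    apply LinearMap.ext; intro t
    have lhs1 : T (v A) s t = B (IntertwinerAux.Gf γ A t) s := rfl
    have step1 : B (IntertwinerAux.Gf γ A t) s = c * B s (IntertwinerAux.Gf γ A t) :=
      hc' s (IntertwinerAux.Gf γ A t)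
    have step2 : B (IntertwinerAux.Pl γ ((A.sort (· ≤ ·)).reverse) s) t
        = B s (IntertwinerAux.Gf γ A t) := by
      have h := IntertwinerAux.intertwine B hBint ((A.sort (· ≤ ·)).reverse) s t
      rwa [List.reverse_reverse] at h
    have step3 : IntertwinerAux.Pl γ ((A.sort (· ≤ ·)).reverse) = ((-1 : ℂ) ^ (A.card * (A.card - 1) / 2)) • IntertwinerAux.Gf γ A := by
      have h := IntertwinerAux.Pl_reverse hanti (A.sort (· ≤ ·)) (A.sort_nodup (· ≤ ·))
      rwa [Finset.length_sort] at h
    have step4 : B (IntertwinerAux.Pl γ ((A.sort (· ≤ ·)).reverse) s) t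
        = ((-1 : ℂ) ^ (A.card * (A.card - 1) / 2)) * B (IntertwinerAux.Gf γ A s) t := by
      rw [step3, LinearMap.smul_apply, map_smul, LinearMap.smul_apply, smul_eq_mul]
    have rhs1 : ((c * ((-1 : ℂ) ^ (A.card * (A.card - 1) / 2))) • v A) s t = (c * ((-1 : ℂ) ^ (A.card * (A.card - 1) / 2))) * B (IntertwinerAux.Gf γ A s) t := rfl
    rw [lhs1, step1, ← step2, step4, rhs1]
    ring
  -- compute the trace of lflip in two ways
  have htrace_basis : LinearMap.trace ℂ (S →ₗ[ℂ] Module.Dual ℂ S) T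
      = ∑ A : Finset (Fin (2 * n)), (c * ((-1 : ℂ) ^ (A.card * (A.card - 1) / 2))) := by
    rw [LinearMap.trace_eq_matrix_trace ℂ bb, Matrix.trace]
    refine Finset.sum_congr rfl fun A _ => ?_
    rw [Matrix.diag, LinearMap.toMatrix_apply]
    have : T (bb A) = (c * ((-1 : ℂ) ^ (A.card * (A.card - 1) / 2))) • bb A := by rw [hbb]; exact hT A
    rw [this, map_smul, Module.Basis.repr_self, Finsupp.smul_apply, Finsupp.single_apply,
      if_pos rfl, smul_eq_mul, mul_one]
  have htrace_flip : LinearMap.trace ℂ (S →ₗ[ℂ] Module.Dual ℂ S) T = (2 : ℂ) ^ n := by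
    rw [hT_def]
    rw [IntertwinerAux.trace_lflip, hdim]
    push_cast
    ring
  have hkey : c * ((2 : ℂ) ^ n * (-1 : ℂ) ^ (n * (n - 1) / 2)) = (2 : ℂ) ^ n := by
    rw [← IntertwinerAux.sum_sign n, Finset.mul_sum, ← htrace_basis]
    exact htrace_flip
  have hσn : ((-1 : ℂ) ^ (n * (n - 1) / 2)) * ((-1 : ℂ) ^ (n * (n - 1) / 2)) = 1 := by
    rw [← pow_add, ← two_mul, pow_mul, neg_one_sq, one_pow]
  have hcval : c = (-1 : ℂ) ^ (n * (n - 1) / 2) := by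
    have h1 : c * (-1 : ℂ) ^ (n * (n - 1) / 2) = 1 :=
      mul_left_cancel₀ h2n (by linear_combination hkey)
    calc c = c * ((-1 : ℂ) ^ (n * (n - 1) / 2) * (-1 : ℂ) ^ (n * (n - 1) / 2)) := by
          rw [hσn, mul_one]
      _ = (c * (-1 : ℂ) ^ (n * (n - 1) / 2)) * (-1 : ℂ) ^ (n * (n - 1) / 2) := by ring
      _ = (-1 : ℂ) ^ (n * (n - 1) / 2) := by rw [h1, one_mul]
  intro s t
  rw [← hcval]
  exact hc' t s
end

section
/- (Proposition 2(i), reality.) Let S, γ_μ, γ^μ, γ_{2n+1}, B, σ be as in the normalized Lorentzian Dirac setting, and let ψ : ℝ^{2n} → S be any map. Then for every μ = 1, …, 2n and every x ∈ ℝ^{2n}, the current component j^μ(ψ)(x) = i^{n+1} ⟨B(γ_{2n+1} ψ_c(x)), γ^μ ψ(x)⟩ is a real number. -/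
section aux
variable {S : Type*} [AddCommGroup S] [Module ℂ S]

lemma move_lemma {m : ℕ} (f : Fin m → Module.End ℂ S) (g : Module.End ℂ S)
    (c : Fin m → ℂ) (h : ∀ i, g * f i = c i • (f i * g)) :
    g * (List.ofFn f).prod = (∏ i, c i) • ((List.ofFn f).prod * g) := by
  induction m with
  | zero => simp
  | succ m ih =>
    rw [List.ofFn_succ, List.prod_cons, Fin.prod_univ_succ]
    have hrec := ih (fun i => f i.succ) (fun i => c i.succ) (fun i => h i.succ)
    calc g * (f 0 * (List.ofFn fun i => f i.succ).prod)
        = (g * f 0) * (List.ofFn fun i => f i.succ).prod := by rw [mul_assoc]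
      _ = (c 0 • (f 0 * g)) * (List.ofFn fun i => f i.succ).prod := by rw [h 0]
      _ = c 0 • (f 0 * (g * (List.ofFn fun i => f i.succ).prod)) := by
          rw [smul_mul_assoc, mul_assoc]
      _ = c 0 • (f 0 * ((∏ i : Fin m, c i.succ) • ((List.ofFn fun i => f i.succ).prod * g))) := by
          rw [hrec]
      _ = (c 0 * ∏ i : Fin m, c i.succ) • (f 0 * (List.ofFn fun i => f i.succ).prod * g) := by
          rw [mul_smul_comm, smul_smul, mul_assoc]

lemma rev_lemma {m : ℕ} (f : Fin m → Module.End ℂ S)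
    (h : ∀ i j, i ≠ j → f i * f j = -(f j * f i)) :
    (List.ofFn f).reverse.prod = ((-1 : ℂ)) ^ (m * (m - 1) / 2) • (List.ofFn f).prod := by
  induction m with
  | zero => simp
  | succ m ih =>
    have hrec := ih (fun i => f i.castSucc)
      (fun i j hij => h i.castSucc j.castSucc (by simpa using hij))
    have hmv := move_lemma (fun i : Fin m => f i.castSucc) (f (Fin.last m))
      (fun _ => (-1 : ℂ)) (fun i => by
        rw [neg_one_smul]
        exact h (Fin.last m) i.castSucc (Fin.ne_of_gt (Fin.castSucc_lt_last i)))
    have hexp : m * (m - 1) / 2 + m = (m + 1) * m / 2 := by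
      cases m with
      | zero => simp
      | succ k =>
        have e1 : (k + 2) * (k + 1) = k * (k + 1) + 2 * (k + 1) := by ring
        have e2 : (k + 1) * k = k * (k + 1) := by ring
        obtain ⟨t, ht⟩ := Nat.even_mul_succ_self k
        simp only [Nat.succ_sub_one]
        rw [e2, e1, ht]
        omega
    rw [List.ofFn_succ', List.concat_eq_append, List.reverse_append, List.prod_append,
      List.prod_append]
    simp only [List.reverse_singleton, List.prod_cons, List.prod_nil, mul_one, one_mul]
    rw [hrec, mul_smul_comm, hmv]
    rw [Finset.prod_const, Finset.card_univ, Fintype.card_fin, smul_smul, ← pow_add, hexp]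
    simp

lemma sigma_prod_comm (σ : S ≃ₛₗ[starRingEnd ℂ] S) (L : List (Module.End ℂ S))
    (h : ∀ a ∈ L, ∀ s : S, σ (a s) = a (σ s)) (s : S) :
    σ (L.prod s) = L.prod (σ s) := by
  induction L with
  | nil => simp
  | cons a L ih =>
    simp only [List.prod_cons, Module.End.mul_apply]
    rw [h a (List.mem_cons_self) (L.prod s), ih (fun b hb => h b (List.mem_cons_of_mem a hb))]

lemma B_prod_move (B : S →ₗ[ℂ] Module.Dual ℂ S) (L : List (Module.End ℂ S)) :
    (∀ a ∈ L, ∀ s t : S, B (a s) t = B s (a t)) → ∀ s t : S,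
    B (L.prod s) t = B s (L.reverse.prod t) := by
  induction L with
  | nil => intro _ s t; simp
  | cons a L ih =>
    intro h s t
    simp only [List.prod_cons, List.reverse_cons, Module.End.mul_apply]
    rw [h a (List.mem_cons_self) (L.prod s) t,
      ih (fun b hb => h b (List.mem_cons_of_mem a hb)) s (a t),
      List.prod_append]
    simp [Module.End.mul_apply]

end aux


/-- Proposition 2(i), reality.  In the normalized Lorentzian Dirac
setting of signature `(2n−1,1)`, for any map `ψ : ℝ^{2n} → S` the current components
`j^μ(ψ)(x) = i^{n+1} ⟨B (γ_{2n+1} ψ_c(x)), γ^μ ψ(x)⟩` are real numbers. -/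
theorem current_is_real
    (n : ℕ) (S : Type*) [AddCommGroup S] [Module ℂ S] [FiniteDimensional ℂ S]
    (hdim : Module.finrank ℂ S = 2 ^ n)
    (γ : Fin (2 * n) → Module.End ℂ S)
    (hCl : ∀ i j : Fin (2 * n), γ i * γ j + γ j * γ i =
      if i = j then ((if (i : ℕ) + 1 < 2 * n then (2 : ℂ) else (-2 : ℂ)) • 1) else 0)
    (γup : Fin (2 * n) → Module.End ℂ S)
    (hγup : ∀ μ : Fin (2 * n), γup μ = if (μ : ℕ) + 1 < 2 * n then γ μ else -γ μ)
    (γ₅ : Module.End ℂ S) (hγ₅ : γ₅ = (List.ofFn γ).prod)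
    (B : S →ₗ[ℂ] Module.Dual ℂ S) (hBbij : Function.Bijective B)
    (hBint : ∀ (μ : Fin (2 * n)) (s t : S), B (γ μ s) t = B s (γ μ t))
    (hBsymm : ∀ s t : S, B s t = (-1 : ℂ) ^ (n * (n - 1) / 2) * B t s)
    (σ : S ≃ₛₗ[starRingEnd ℂ] S)
    (hσint : ∀ (μ : Fin (2 * n)) (s : S), σ (γ μ s) = γ μ (σ s))
    (hσσ : ∀ s : S, σ (σ s) = ((-1 : ℂ) ^ ((n - 1) * (n - 2) / 2)) • s)
    (hherm : ∀ s t : S, starRingEnd ℂ (B (σ s) t) = B (σ t) s)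
    (ψ : (Fin (2 * n) → ℝ) → S)
    (j : Fin (2 * n) → (Fin (2 * n) → ℝ) → ℂ)
    (hj : ∀ (μ : Fin (2 * n)) (x : Fin (2 * n) → ℝ),
      j μ x = Complex.I ^ (n + 1) * B (γ₅ (σ.symm (ψ x))) (γup μ (ψ x))) :
    ∀ (μ : Fin (2 * n)) (x : Fin (2 * n) → ℝ), (j μ x).im = 0 := by
  intro μ x
  have hn : 0 < n := by have := μ.isLt; omega
  set ε : ℂ := (-1 : ℂ) ^ ((n - 1) * (n - 2) / 2) with hε
  set δ : ℂ := (-1 : ℂ) ^ (n * (n - 1) / 2) with hδ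
  have hεsq : ε * ε = 1 := by
    rw [hε, ← pow_add]; exact Even.neg_one_pow ⟨_, rfl⟩
  have hδsq : δ * δ = 1 := by
    rw [hδ, ← pow_add]; exact Even.neg_one_pow ⟨_, rfl⟩
  -- σ u = ε • σ.symm u
  have hσs : ∀ u : S, σ u = ε • σ.symm u := by
    intro u
    have h := hσσ (σ.symm u)
    rwa [σ.apply_symm_apply] at h
  have hσσ' : ∀ u : S, σ.symm (σ.symm u) = ε • u := by
    intro u
    have h := hσs (σ.symm u)
    rw [σ.apply_symm_apply] at h
    calc σ.symm (σ.symm u) = (ε * ε) • σ.symm (σ.symm u) := by rw [hεsq, one_smul]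
      _ = ε • (ε • σ.symm (σ.symm u)) := by rw [smul_smul]
      _ = ε • u := by rw [← h]
  -- σ commutes with γ₅
  have hσγ₅ : ∀ u : S, σ (γ₅ u) = γ₅ (σ u) := by
    intro u
    rw [hγ₅]
    refine sigma_prod_comm σ _ (fun a ha s => ?_) u
    rw [List.mem_ofFn] at ha
    obtain ⟨i, rfl⟩ := ha
    exact hσint i s
  -- σ and B intertwine γup
  have hσup : ∀ u : S, σ (γup μ u) = γup μ (σ u) := by
    intro u; rw [hγup]; split_ifs
    · exact hσint μ u
    · simp only [LinearMap.neg_apply, map_neg, hσint μ u]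
  have hBup : ∀ u w : S, B (γup μ u) w = B u (γup μ w) := by
    intro u w; rw [hγup]; split_ifs
    · exact hBint μ u w
    · simp only [LinearMap.neg_apply, map_neg, LinearMap.neg_apply]
      rw [hBint μ u w]
  -- anticommutation of γ₅ with γ μ
  have hmove := move_lemma γ (γ μ) (fun i => if i = μ then (1 : ℂ) else -1) (fun i => by
    by_cases hiμ : i = μ
    · subst hiμ; simp
    · simp only [if_neg hiμ]
      rw [neg_one_smul]
      have h := hCl μ i
      rw [if_neg (fun hh => hiμ hh.symm)] at h
      exact eq_neg_of_add_eq_zero_left h)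
  have hprodc : (∏ i : Fin (2 * n), (if i = μ then (1 : ℂ) else -1)) = -1 := by
    rw [Finset.prod_eq_mul_prod_sdiff_singleton_of_mem (Finset.mem_univ μ)]
    rw [if_pos rfl, one_mul]
    rw [Finset.prod_congr rfl (fun i hi => by
      rw [if_neg]
      intro hiμ
      rw [hiμ] at hi
      simp at hi)]
    rw [Finset.prod_const, Finset.card_sdiff_of_subset (Finset.singleton_subset_iff.mpr (Finset.mem_univ μ)),
      Finset.card_univ, Fintype.card_fin, Finset.card_singleton]
    exact Odd.neg_one_pow ⟨n - 1, by omega⟩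
  rw [hprodc, neg_one_smul, ← hγ₅] at hmove
  have hac : γ₅ * γ μ = -(γ μ * γ₅) := by rw [hmove, neg_neg]
  have hacup : γ₅ * γup μ = -(γup μ * γ₅) := by
    rw [hγup]; split_ifs
    · exact hac
    · rw [mul_neg, hac, neg_neg, neg_mul, neg_neg]
  -- reversal: B (γ₅ u) w = (-1)^n * B u (γ₅ w)
  have hrev := rev_lemma γ (fun i j hij => by
    have h := hCl i j
    rw [if_neg hij] at h
    exact eq_neg_of_add_eq_zero_left h)
  have hexp2 : 2 * n * (2 * n - 1) / 2 = n * (2 * n - 1) := by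
    have h1 : 2 * n * (2 * n - 1) = 2 * (n * (2 * n - 1)) := by ring
    rw [h1, Nat.mul_div_cancel_left _ (by norm_num)]
  have hρ2 : ((-1 : ℂ)) ^ (n * (2 * n - 1)) = (-1) ^ n := by
    rcases Nat.even_or_odd n with he | ho
    · rw [he.neg_one_pow, (he.mul_right _).neg_one_pow]
    · have h1 : Odd (2 * n - 1) := ⟨n - 1, by omega⟩
      rw [ho.neg_one_pow, (ho.mul h1).neg_one_pow]
  rw [hexp2, hρ2] at hrev
  have hBγ₅ : ∀ u w : S, B (γ₅ u) w = (-1 : ℂ) ^ n * B u (γ₅ w) := by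
    intro u w
    rw [hγ₅, B_prod_move B (List.ofFn γ) (fun a ha s t => by
      rw [List.mem_ofFn] at ha
      obtain ⟨i, rfl⟩ := ha
      exact hBint i s t) u w, hrev]
    rw [LinearMap.smul_apply, map_smul, smul_eq_mul]
  -- main computation
  rw [hj μ x, ← Complex.conj_eq_iff_im]
  set s := ψ x with hs
  set φ := σ.symm s with hφ
  set X : ℂ := B (γ₅ φ) (γup μ s) with hX
  have key : (starRingEnd ℂ) X = (-1 : ℂ) ^ (n + 1) * X := by
    have c1 : (starRingEnd ℂ) X
        = ε * (δ * (ε * ((-1 : ℂ) ^ n * (-1 * (δ * X))))) := by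
      calc (starRingEnd ℂ) X
          = (starRingEnd ℂ) (B (σ (γ₅ (σ.symm φ))) (γup μ s)) := by
            rw [hX, hσγ₅, σ.apply_symm_apply]
        _ = B (σ (γup μ s)) (γ₅ (σ.symm φ)) := hherm _ _
        _ = B (γup μ (σ s)) (γ₅ (ε • s)) := by rw [hσup, hφ, hσσ' s]
        _ = ε * B (γup μ (σ s)) (γ₅ s) := by rw [map_smul, map_smul, smul_eq_mul]
        _ = ε * (δ * B (γ₅ s) (γup μ (σ s))) := by rw [hBsymm (γup μ (σ s)) (γ₅ s)]
        _ = ε * (δ * B (γ₅ s) (γup μ (ε • φ))) := by rw [← hσs s]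
        _ = ε * (δ * (ε * B (γ₅ s) (γup μ φ))) := by
            rw [map_smul, map_smul, smul_eq_mul]
        _ = ε * (δ * (ε * ((-1 : ℂ) ^ n * B s (γ₅ (γup μ φ))))) := by
            rw [hBγ₅]
        _ = ε * (δ * (ε * ((-1 : ℂ) ^ n * (-1 * B s (γup μ (γ₅ φ)))))) := by
            have : γ₅ (γup μ φ) = -(γup μ (γ₅ φ)) := by
              have := congrArg (fun f : Module.End ℂ S => f φ) hacup
              simpa [Module.End.mul_apply] using this
            rw [this, map_neg, neg_one_mul]
        _ = ε * (δ * (ε * ((-1 : ℂ) ^ n * (-1 * (δ * X))))) := by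
            rw [← hBup s (γ₅ φ), hBsymm (γup μ s) (γ₅ φ), ← hX]
    rw [c1]
    have hε' : ε * ε = 1 := hεsq
    have hδ' : δ * δ = 1 := hδsq
    linear_combination ((-1 : ℂ) ^ (n + 1) * δ * δ * X) * hε'
      + ((-1 : ℂ) ^ (n + 1) * X) * hδ'
  rw [map_mul, map_pow, Complex.conj_I, key, ← mul_assoc, ← mul_pow]
  ring_nf
end

section
/- (Proposition 2(i), invariance under charge conjugation.) Let S, γ_μ, γ^μ, γ_{2n+1}, B, σ be as in the normalized Lorentzian Dirac setting, and let ψ : ℝ^{2n} → S be any map. Then the current is invariant under the replacement of ψ by its charge conjugate: j^μ(ψ_c)(x) = j^μ(ψ)(x) for every μ = 1, …, 2n and every x ∈ ℝ^{2n}. -/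
section Aux

variable {n : ℕ} {S : Type*} [AddCommGroup S] [Module ℂ S]

lemma aux_anticomm (γ : Fin (2 * n) → Module.End ℂ S)
    (hCl : ∀ i j : Fin (2 * n), γ i * γ j + γ j * γ i =
      if i = j then ((if (i : ℕ) + 1 < 2 * n then (2 : ℂ) else (-2 : ℂ)) • 1) else 0)
    {i j : Fin (2 * n)} (h : i ≠ j) : γ i * γ j = -(γ j * γ i) := by
  have h2 := hCl i j
  rw [if_neg h] at h2
  exact eq_neg_of_add_eq_zero_left h2

lemma aux_move (γ : Fin (2 * n) → Module.End ℂ S)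
    (hCl : ∀ i j : Fin (2 * n), γ i * γ j + γ j * γ i =
      if i = j then ((if (i : ℕ) + 1 < 2 * n then (2 : ℂ) else (-2 : ℂ)) • 1) else 0)
    (a : Fin (2 * n)) :
    ∀ l : List (Fin (2 * n)), a ∉ l →
      γ a * (l.map γ).prod = ((-1 : ℂ) ^ l.length) • ((l.map γ).prod * γ a) := by
  intro l
  induction l with
  | nil => simp
  | cons b l ih =>
    intro h
    have hab : a ≠ b := fun e => h (e ▸ (List.mem_cons_self : b ∈ b :: l))
    have hal : a ∉ l := fun e => h (List.mem_cons_of_mem _ e)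
    have key := ih hal
    calc γ a * ((b :: l).map γ).prod
        = (γ a * γ b) * (l.map γ).prod := by simp [mul_assoc]
      _ = -(γ b * (γ a * (l.map γ).prod)) := by
          rw [aux_anticomm γ hCl hab]; simp [mul_assoc]
      _ = -(γ b * (((-1 : ℂ) ^ l.length) • ((l.map γ).prod * γ a))) := by rw [key]
      _ = ((-1 : ℂ) ^ (b :: l).length) • (((b :: l).map γ).prod * γ a) := by
          simp [mul_smul_comm, pow_succ, mul_assoc, mul_comm]

lemma aux_smul_cancel {c : ℂ} (hc : c * c = 1) {x y : Module.End ℂ S}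
    (h : x = c • y) : y = c • x := by
  rw [h, smul_smul, hc, one_smul]

lemma aux_rev (γ : Fin (2 * n) → Module.End ℂ S)
    (hCl : ∀ i j : Fin (2 * n), γ i * γ j + γ j * γ i =
      if i = j then ((if (i : ℕ) + 1 < 2 * n then (2 : ℂ) else (-2 : ℂ)) • 1) else 0) :
    ∀ l : List (Fin (2 * n)), l.Nodup →
      ((l.map γ).reverse).prod = ((-1 : ℂ) ^ (l.length.choose 2)) • (l.map γ).prod := by
  intro l
  induction l with
  | nil => simp
  | cons a l ih =>
    intro h
    rw [List.nodup_cons] at h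
    obtain ⟨hal, hnd⟩ := h
    have hmove := aux_move γ hCl a l hal
    have hmove' : (l.map γ).prod * γ a
        = ((-1 : ℂ) ^ l.length) • (γ a * (l.map γ).prod) :=
      aux_smul_cancel (by rw [← pow_add]; exact Even.neg_one_pow ⟨l.length, rfl⟩) hmove
    calc (((a :: l).map γ).reverse).prod
        = ((l.map γ).reverse).prod * γ a := by simp
      _ = ((-1 : ℂ) ^ (l.length.choose 2)) • ((l.map γ).prod * γ a) := by
          rw [ih hnd]; simp [smul_mul_assoc]
      _ = ((-1 : ℂ) ^ (l.length.choose 2)) • (((-1 : ℂ) ^ l.length) • (γ a * (l.map γ).prod)) := by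
          rw [hmove']
      _ = ((-1 : ℂ) ^ ((a :: l).length.choose 2)) • (((a :: l).map γ).prod) := by
          rw [smul_smul, ← pow_add]
          have h3 : (a :: l).length.choose 2 = l.length.choose 2 + l.length := by
            rw [List.length_cons, Nat.choose_succ_succ, Nat.choose_one_right, Nat.add_comm]
          rw [h3]
          simp [mul_assoc]

lemma aux_g5_anticomm (γ : Fin (2 * n) → Module.End ℂ S)
    (hCl : ∀ i j : Fin (2 * n), γ i * γ j + γ j * γ i =
      if i = j then ((if (i : ℕ) + 1 < 2 * n then (2 : ℂ) else (-2 : ℂ)) • 1) else 0)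
    (a : Fin (2 * n)) :
    γ a * (List.ofFn γ).prod = -((List.ofFn γ).prod * γ a) := by
  have hofn : List.ofFn γ = (List.finRange (2 * n)).map γ := List.ofFn_eq_map
  obtain ⟨l1, l2, hdecomp⟩ := List.append_of_mem (List.mem_finRange a)
  have hnd : (l1 ++ a :: l2).Nodup := hdecomp ▸ List.nodup_finRange (2 * n)
  rw [List.nodup_append] at hnd
  have hal1 : a ∉ l1 := fun e => hnd.2.2 a e a (List.mem_cons_self : a ∈ a :: l2) rfl
  have hal2 : a ∉ l2 := fun e => (List.nodup_cons.mp hnd.2.1).1 e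
  have hlen : l1.length + l2.length + 1 = 2 * n := by
    have := congrArg List.length hdecomp
    simp at this; omega
  have hm1 := aux_move γ hCl a l1 hal1
  have hm2' : (l2.map γ).prod * γ a = ((-1 : ℂ) ^ l2.length) • (γ a * (l2.map γ).prod) :=
    aux_smul_cancel (by rw [← pow_add]; exact Even.neg_one_pow ⟨l2.length, rfl⟩)
      (aux_move γ hCl a l2 hal2)
  set P1 := (l1.map γ).prod
  set P2 := (l2.map γ).prod
  have hprod : (List.ofFn γ).prod = P1 * (γ a * P2) := by
    rw [hofn, hdecomp]; simp [P1, P2, mul_assoc]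
  have h1 : γ a * (List.ofFn γ).prod
      = ((-1 : ℂ) ^ l1.length) • (P1 * (γ a * (γ a * P2))) := by
    rw [hprod, ← mul_assoc, hm1]
    simp [smul_mul_assoc, mul_assoc]
  have h2 : (List.ofFn γ).prod * γ a
      = ((-1 : ℂ) ^ l2.length) • (P1 * (γ a * (γ a * P2))) := by
    rw [hprod, mul_assoc, mul_assoc, hm2']
    simp [mul_smul_comm, mul_assoc]
  have hodd : Odd (l1.length + l2.length) := ⟨n - 1, by omega⟩
  rw [h1, h2]
  have : ((-1 : ℂ) ^ l2.length) * ((-1 : ℂ) ^ l2.length) = 1 := by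
    rw [← pow_add]; exact Even.neg_one_pow ⟨l2.length, rfl⟩
  calc ((-1 : ℂ) ^ l1.length) • (P1 * (γ a * (γ a * P2)))
      = (((-1 : ℂ) ^ (l1.length + l2.length)) * ((-1 : ℂ) ^ l2.length))
          • (P1 * (γ a * (γ a * P2))) := by
        rw [pow_add, mul_assoc, this, mul_one]
    _ = -(((-1 : ℂ) ^ l2.length) • (P1 * (γ a * (γ a * P2)))) := by
        rw [hodd.neg_one_pow]; simp

lemma aux_Btransfer (γ : Fin (2 * n) → Module.End ℂ S)
    (B : S →ₗ[ℂ] Module.Dual ℂ S)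
    (hBint : ∀ (μ : Fin (2 * n)) (s t : S), B (γ μ s) t = B s (γ μ t)) :
    ∀ (l : List (Fin (2 * n))) (s t : S),
      B (((l.map γ).prod) s) t = B s (((l.map γ).reverse.prod) t) := by
  intro l
  induction l with
  | nil => simp
  | cons a l ih =>
    intro s t
    have h1 : ((a :: l).map γ).prod s = γ a ((l.map γ).prod s) := by
      simp [Module.End.mul_apply]
    rw [h1, hBint, ih]
    have h2 : ((a :: l).map γ).reverse.prod = (l.map γ).reverse.prod * γ a := by simp
    rw [h2]
    rfl

lemma aux_sign (m : ℕ) :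
    ((-1 : ℂ) ^ (((m+1)-1) * ((m+1)-2) / 2)) * ((-1 : ℂ) ^ ((m+1) * ((m+1)-1) / 2))
      * ((-1 : ℂ) ^ ((2 * (m+1)).choose 2)) = -1 := by
  have h1 : m + 1 - 1 = m := by omega
  have h2 : m + 1 - 2 = m - 1 := by omega
  have e1 : (m + 1 - 1) * (m + 1 - 2) / 2 = m.choose 2 := by
    rw [h1, h2, Nat.choose_two_right]
  have e2 : (m + 1) * (m + 1 - 1) / 2 = m.choose 2 + m := by
    rw [← Nat.choose_two_right, Nat.choose_succ_succ, Nat.choose_one_right, Nat.add_comm]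
  have e3 : (2 * (m + 1)).choose 2 = (m + 1) * (2 * (m + 1) - 1) := by
    rw [Nat.choose_two_right, mul_assoc]
    exact Nat.mul_div_cancel_left _ (by norm_num)
  have e4 : (m + 1) * (2 * (m + 1) - 1) = 2 * (m * (m + 1)) + (m + 1) := by
    have h3 : 2 * (m + 1) - 1 = 2 * m + 1 := by omega
    rw [h3]; ring
  rw [e1, e2, e3, e4, ← pow_add, ← pow_add]
  apply Odd.neg_one_pow
  exact ⟨m.choose 2 + m * (m + 1) + m, by omega⟩

lemma aux_key (γ : Fin (2 * n) → Module.End ℂ S)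
    (hCl : ∀ i j : Fin (2 * n), γ i * γ j + γ j * γ i =
      if i = j then ((if (i : ℕ) + 1 < 2 * n then (2 : ℂ) else (-2 : ℂ)) • 1) else 0)
    (γ₅ : Module.End ℂ S) (hγ₅ : γ₅ = (List.ofFn γ).prod)
    (B : S →ₗ[ℂ] Module.Dual ℂ S)
    (hBint : ∀ (μ : Fin (2 * n)) (s t : S), B (γ μ s) t = B s (γ μ t))
    (hBsymm : ∀ s t : S, B s t = (-1 : ℂ) ^ (n * (n - 1) / 2) * B t s)
    (μ : Fin (2 * n)) (s u : S) :
    ((-1 : ℂ) ^ ((n - 1) * (n - 2) / 2)) * B (γ₅ s) (γ μ u) = B (γ₅ u) (γ μ s) := by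
  have hn : 1 ≤ n := by have := μ.isLt; omega
  have hofn : List.ofFn γ = (List.finRange (2 * n)).map γ := List.ofFn_eq_map
  have htrans : ∀ x y : S, B (γ₅ x) y = ((-1 : ℂ) ^ ((2 * n).choose 2)) * B x (γ₅ y) := by
    intro x y
    rw [hγ₅, hofn, aux_Btransfer γ B hBint (List.finRange (2 * n)) x y,
        aux_rev γ hCl _ (List.nodup_finRange _)]
    simp [List.length_finRange]
  have hanti : γ₅ * γ μ = -(γ μ * γ₅) := by
    rw [hγ₅, aux_g5_anticomm γ hCl μ, neg_neg]
  set c0 : ℂ := (-1 : ℂ) ^ ((2 * n).choose 2) with hc0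
  set ε : ℂ := (-1 : ℂ) ^ ((n - 1) * (n - 2) / 2) with hε
  set β : ℂ := (-1 : ℂ) ^ (n * (n - 1) / 2) with hβ
  have hsign : ε * β * c0 = -1 := by
    obtain ⟨m, rfl⟩ : ∃ m, n = m + 1 := ⟨n - 1, by omega⟩
    exact aux_sign m
  calc ε * B (γ₅ s) (γ μ u)
      = ε * (c0 * B s (γ₅ (γ μ u))) := by rw [htrans]
    _ = (ε * c0) * B s ((γ₅ * γ μ) u) := by rw [Module.End.mul_apply]; ring
    _ = (ε * c0) * B s ((-(γ μ * γ₅)) u) := by rw [hanti]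
    _ = -((ε * c0) * B s (γ μ (γ₅ u))) := by
        rw [LinearMap.neg_apply, Module.End.mul_apply, map_neg]; ring
    _ = -((ε * c0) * B (γ μ s) (γ₅ u)) := by rw [hBint]
    _ = -((ε * c0) * (β * B (γ₅ u) (γ μ s))) := by rw [← hBsymm]
    _ = (-(ε * β * c0)) * B (γ₅ u) (γ μ s) := by ring
    _ = B (γ₅ u) (γ μ s) := by rw [hsign]; ring

lemma aux_keyup (γ : Fin (2 * n) → Module.End ℂ S)
    (hCl : ∀ i j : Fin (2 * n), γ i * γ j + γ j * γ i =
      if i = j then ((if (i : ℕ) + 1 < 2 * n then (2 : ℂ) else (-2 : ℂ)) • 1) else 0)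
    (γup : Fin (2 * n) → Module.End ℂ S)
    (hγup : ∀ μ : Fin (2 * n), γup μ = if (μ : ℕ) + 1 < 2 * n then γ μ else -γ μ)
    (γ₅ : Module.End ℂ S) (hγ₅ : γ₅ = (List.ofFn γ).prod)
    (B : S →ₗ[ℂ] Module.Dual ℂ S)
    (hBint : ∀ (μ : Fin (2 * n)) (s t : S), B (γ μ s) t = B s (γ μ t))
    (hBsymm : ∀ s t : S, B s t = (-1 : ℂ) ^ (n * (n - 1) / 2) * B t s)
    (μ : Fin (2 * n)) (s u : S) :
    ((-1 : ℂ) ^ ((n - 1) * (n - 2) / 2)) * B (γ₅ s) (γup μ u) = B (γ₅ u) (γup μ s) := by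
  rw [hγup]
  split_ifs with h
  · exact aux_key γ hCl γ₅ hγ₅ B hBint hBsymm μ s u
  · have := aux_key γ hCl γ₅ hγ₅ B hBint hBsymm μ s u
    rw [LinearMap.neg_apply, LinearMap.neg_apply, map_neg, map_neg, ← this]
    ring

end Aux

/-- Proposition 2(i), invariance under charge conjugation.  In the
normalized Lorentzian Dirac setting of signature `(2n−1,1)`, for any map
`ψ : ℝ^{2n} → S` the current `j^μ(ψ)(x) = i^{n+1} ⟨B (γ_{2n+1} ψ_c(x)), γ^μ ψ(x)⟩`
satisfies `j^μ(ψ_c) = j^μ(ψ)`. -/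
theorem current_invariant_under_charge_conjugation
    (n : ℕ) (S : Type*) [AddCommGroup S] [Module ℂ S] [FiniteDimensional ℂ S]
    (hdim : Module.finrank ℂ S = 2 ^ n)
    (γ : Fin (2 * n) → Module.End ℂ S)
    (hCl : ∀ i j : Fin (2 * n), γ i * γ j + γ j * γ i =
      if i = j then ((if (i : ℕ) + 1 < 2 * n then (2 : ℂ) else (-2 : ℂ)) • 1) else 0)
    (γup : Fin (2 * n) → Module.End ℂ S)
    (hγup : ∀ μ : Fin (2 * n), γup μ = if (μ : ℕ) + 1 < 2 * n then γ μ else -γ μ)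
    (γ₅ : Module.End ℂ S) (hγ₅ : γ₅ = (List.ofFn γ).prod)
    (B : S →ₗ[ℂ] Module.Dual ℂ S) (hBbij : Function.Bijective B)
    (hBint : ∀ (μ : Fin (2 * n)) (s t : S), B (γ μ s) t = B s (γ μ t))
    (hBsymm : ∀ s t : S, B s t = (-1 : ℂ) ^ (n * (n - 1) / 2) * B t s)
    (σ : S ≃ₛₗ[starRingEnd ℂ] S)
    (hσint : ∀ (μ : Fin (2 * n)) (s : S), σ (γ μ s) = γ μ (σ s))
    (hσσ : ∀ s : S, σ (σ s) = ((-1 : ℂ) ^ ((n - 1) * (n - 2) / 2)) • s)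
    (hherm : ∀ s t : S, starRingEnd ℂ (B (σ s) t) = B (σ t) s)
    (jfun : ((Fin (2 * n) → ℝ) → S) → Fin (2 * n) → (Fin (2 * n) → ℝ) → ℂ)
    (hjfun : ∀ (φ : (Fin (2 * n) → ℝ) → S) (μ : Fin (2 * n)) (x : Fin (2 * n) → ℝ),
      jfun φ μ x = Complex.I ^ (n + 1) * B (γ₅ (σ.symm (φ x))) (γup μ (φ x))) :
    ∀ (ψ : (Fin (2 * n) → ℝ) → S) (μ : Fin (2 * n)) (x : Fin (2 * n) → ℝ),
      jfun (fun y => σ.symm (ψ y)) μ x = jfun ψ μ x := by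
  intro ψ μ x
  rw [hjfun, hjfun]
  set ε : ℂ := (-1 : ℂ) ^ ((n - 1) * (n - 2) / 2) with hε
  have hεε : ε * ε = 1 := by
    rw [hε, ← pow_add]; exact Even.neg_one_pow ⟨_, rfl⟩
  have hss : σ.symm (σ.symm (ψ x)) = ε • ψ x := by
    have h1 := hσσ (σ.symm (σ.symm (ψ x)))
    rw [σ.apply_symm_apply, σ.apply_symm_apply] at h1
    calc σ.symm (σ.symm (ψ x)) = (ε * ε) • σ.symm (σ.symm (ψ x)) := by
          rw [hεε, one_smul]
      _ = ε • (ε • σ.symm (σ.symm (ψ x))) := by rw [mul_smul]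
      _ = ε • ψ x := by rw [← h1]
  rw [hss, map_smul, map_smul, LinearMap.smul_apply, smul_eq_mul,
    aux_keyup γ hCl γup hγup γ₅ hγ₅ B hBint hBsymm μ (ψ x) (σ.symm (ψ x))]
end

section
/- (Proposition 2(ii), current conservation.) Let S, γ_μ, γ^μ, γ_{2n+1}, B, σ be as in the normalized Lorentzian Dirac setting, let m, e ∈ ℝ, let A₁, …, A_{2n} : ℝ^{2n} → ℝ and let ψ : ℝ^{2n} → S be differentiable. If ψ satisfies the Dirac equation Σ_μ γ^μ(∂_μ ψ(x) − i e A_μ(x) ψ(x)) = m ψ(x) for all x, then the current is conserved: Σ_μ ∂_μ (j^μ(ψ))(x) = 0 for all x ∈ ℝ^{2n}. -/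
theorem aux_countP {k : ℕ} (μ : Fin k) : ∀ (L : List (Fin k)), L.Nodup → μ ∈ L →
    L.countP (fun ν => ν ≠ μ) = L.length - 1 := by
  intro L
  induction L with
  | nil => simp
  | cons a L ih =>
    intro hnd hm
    by_cases h : a = μ
    · subst h
      have hnotin : a ∉ L := (List.nodup_cons.mp hnd).1
      rw [List.countP_cons_of_neg (p := fun ν => decide (ν ≠ a)) (by simp)]
      rw [List.countP_eq_length.mpr (by intro x hx; simp; rintro rfl; exact hnotin hx)]
      simp
    · have hm' : μ ∈ L := by rcases List.mem_cons.mp hm with h' | h' ; exact absurd h'.symm h; exact h'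
      rw [List.countP_cons_of_pos (p := fun ν => decide (ν ≠ μ)) (by simp [h])]
      rw [ih (List.nodup_cons.mp hnd).2 hm']
      have : 1 ≤ L.length := List.length_pos_iff.mpr (List.ne_nil_of_mem hm')
      simp; omega

theorem aux_anticomm_s15 {S : Type*} [AddCommGroup S] [Module ℂ S] {k : ℕ}
    (γ : Fin k → Module.End ℂ S) (μ : Fin k)
    (h : ∀ ν, ν ≠ μ → γ μ * γ ν = -(γ ν * γ μ)) :
    ∀ L : List (Fin k), γ μ * (L.map γ).prod =
      ((-1:ℂ) ^ (L.countP (fun ν => ν ≠ μ))) • ((L.map γ).prod * γ μ) := by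
  intro L
  induction L with
  | nil => simp
  | cons a L ih =>
    rw [List.map_cons, List.prod_cons]
    by_cases h' : a = μ
    · rw [List.countP_cons_of_neg (p := fun ν => decide (ν ≠ μ)) (by simp [h'])]
      subst h'
      conv_lhs => rw [ih]
      rw [mul_smul_comm, ← mul_assoc]
    · rw [List.countP_cons_of_pos (p := fun ν => decide (ν ≠ μ)) (by simp [h'])]
      rw [← mul_assoc, h a h', neg_mul, mul_assoc]
      conv_lhs => rw [ih]
      rw [mul_smul_comm, pow_succ, mul_smul, ← mul_assoc]
      simp

noncomputable def diracForm {S : Type*} [AddCommGroup S] [Module ℝ S] [Module ℂ S]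
    [IsScalarTower ℝ ℂ S]
    (B : S →ₗ[ℂ] Module.Dual ℂ S) (γ₅ : Module.End ℂ S) (σ : S ≃ₛₗ[starRingEnd ℂ] S) :
    S →ₗ[ℝ] S →ₗ[ℝ] ℂ :=
  LinearMap.mk₂ ℝ (fun u v => B (γ₅ (σ.symm u)) v)
    (fun u u' v => by simp)
    (fun r u v => by
      have h1 : (r : ℝ) • u = ((r:ℂ)) • u := by rw [← algebraMap_smul ℂ r u]; norm_num
      show B (γ₅ (σ.symm (r • u))) v = r • B (γ₅ (σ.symm u)) v
      rw [h1, map_smulₛₗ, map_smul, map_smul, LinearMap.smul_apply, Complex.conj_ofReal,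
        smul_eq_mul, Complex.real_smul])
    (fun u v v' => by simp)
    (fun r u v => by
      have h1 : (r : ℝ) • v = ((r:ℂ)) • v := by rw [← algebraMap_smul ℂ r v]; norm_num
      show B (γ₅ (σ.symm u)) (r • v) = r • B (γ₅ (σ.symm u)) v
      rw [h1, map_smul, smul_eq_mul, Complex.real_smul])

theorem diracForm_apply {S : Type*} [AddCommGroup S] [Module ℝ S] [Module ℂ S]
    [IsScalarTower ℝ ℂ S]
    (B : S →ₗ[ℂ] Module.Dual ℂ S) (γ₅ : Module.End ℂ S) (σ : S ≃ₛₗ[starRingEnd ℂ] S)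
    (u v : S) : diracForm B γ₅ σ u v = B (γ₅ (σ.symm u)) v := rfl



/-- Proposition 2(ii), current conservation.  In the normalized
Lorentzian Dirac setting of signature `(2n−1,1)`, if the differentiable wave function
`ψ : ℝ^{2n} → S` satisfies the Dirac equation
`Σ_μ γ^μ (∂_μ ψ − i e A_μ ψ) = m ψ`, then the current
`j^μ(ψ) = i^{n+1} ⟨B (γ_{2n+1} ψ_c), γ^μ ψ⟩` is conserved: `Σ_μ ∂_μ j^μ(ψ) = 0`. -/
theorem current_conservation
    (n : ℕ) (S : Type*) [NormedAddCommGroup S] [NormedSpace ℂ S]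
    [FiniteDimensional ℂ S] (hdim : Module.finrank ℂ S = 2 ^ n)
    (γ : Fin (2 * n) → Module.End ℂ S)
    (hCl : ∀ i j : Fin (2 * n), γ i * γ j + γ j * γ i =
      if i = j then ((if (i : ℕ) + 1 < 2 * n then (2 : ℂ) else (-2 : ℂ)) • 1) else 0)
    (γup : Fin (2 * n) → Module.End ℂ S)
    (hγup : ∀ μ : Fin (2 * n), γup μ = if (μ : ℕ) + 1 < 2 * n then γ μ else -γ μ)
    (γ₅ : Module.End ℂ S) (hγ₅ : γ₅ = (List.ofFn γ).prod)
    (B : S →ₗ[ℂ] Module.Dual ℂ S) (hBbij : Function.Bijective B)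
    (hBint : ∀ (μ : Fin (2 * n)) (s t : S), B (γ μ s) t = B s (γ μ t))
    (hBsymm : ∀ s t : S, B s t = (-1 : ℂ) ^ (n * (n - 1) / 2) * B t s)
    (σ : S ≃ₛₗ[starRingEnd ℂ] S)
    (hσint : ∀ (μ : Fin (2 * n)) (s : S), σ (γ μ s) = γ μ (σ s))
    (hσσ : ∀ s : S, σ (σ s) = ((-1 : ℂ) ^ ((n - 1) * (n - 2) / 2)) • s)
    (hherm : ∀ s t : S, starRingEnd ℂ (B (σ s) t) = B (σ t) s)
    (m e : ℝ) (A : Fin (2 * n) → (Fin (2 * n) → ℝ) → ℝ)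
    (ψ : (Fin (2 * n) → ℝ) → S) (hψ : Differentiable ℝ ψ)
    (hDirac : ∀ x : Fin (2 * n) → ℝ,
      ∑ μ : Fin (2 * n), γup μ (fderiv ℝ ψ x (Pi.single μ 1)
        - (Complex.I * (e : ℂ) * (A μ x : ℂ)) • ψ x) = (m : ℂ) • ψ x)
    (j : Fin (2 * n) → (Fin (2 * n) → ℝ) → ℂ)
    (hj : ∀ (μ : Fin (2 * n)) (x : Fin (2 * n) → ℝ),
      j μ x = Complex.I ^ (n + 1) * B (γ₅ (σ.symm (ψ x))) (γup μ (ψ x))) :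
    ∀ x : Fin (2 * n) → ℝ,
      ∑ μ : Fin (2 * n), fderiv ℝ (j μ) x (Pi.single μ 1) = 0 := by
  intro x
  rcases Nat.eq_zero_or_pos n with hn | hn
  · subst hn; simp
  set C : ℂ := Complex.I ^ (n+1) with hC
  -- σ.symm commutes with γ
  have hσs : ∀ (μ) (s : S), σ.symm (γ μ s) = γ μ (σ.symm s) := by
    intro μ s
    apply σ.injective
    rw [σ.apply_symm_apply, hσint, σ.apply_symm_apply]
  -- anticommutation of distinct gammas
  have hanti : ∀ μ ν, ν ≠ μ → γ μ * γ ν = -(γ ν * γ μ) := by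
    intro μ ν h
    have h2 := hCl μ ν
    rw [if_neg (fun h' => h h'.symm)] at h2
    exact eq_neg_of_add_eq_zero_left h2
  -- γ₅ anticommutes with each γ μ
  have hγ₅γ : ∀ μ, γ₅ * γ μ = -(γ μ * γ₅) := by
    intro μ
    have h3 := aux_anticomm_s15 γ μ (hanti μ) (List.finRange (2*n))
    have hc : (List.finRange (2*n)).countP (fun ν => ν ≠ μ) = 2*n - 1 := by
      rw [aux_countP μ (List.finRange (2*n)) (List.nodup_finRange _) (List.mem_finRange μ)]
      simp
    rw [hc, Odd.neg_one_pow ⟨n-1, by omega⟩, neg_one_smul] at h3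
    rw [hγ₅, List.ofFn_eq_map]
    rw [eq_comm, neg_eq_iff_eq_neg, ← h3]
  have hγ₅app : ∀ (μ) (s : S), γ₅ (γ μ s) = -(γ μ (γ₅ s)) := by
    intro μ s
    have h4 := congrArg (fun f : Module.End ℂ S => f s) (hγ₅γ μ)
    simpa [Module.End.mul_apply] using h4
  -- the key flip identity
  have hkey : ∀ (μ) (u v : S),
      B (γ₅ (σ.symm (γup μ u))) v = -(B (γ₅ (σ.symm u)) (γup μ v)) := by
    intro μ u v
    have base : ∀ u v : S, B (γ₅ (σ.symm (γ μ u))) v = -(B (γ₅ (σ.symm u)) (γ μ v)) := by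
      intro u v
      rw [hσs, hγ₅app, map_neg, LinearMap.neg_apply, hBint]
    rw [hγup μ]
    by_cases h : (μ:ℕ)+1 < 2*n
    · simp only [if_pos h]; exact base u v
    · simp only [if_neg h, LinearMap.neg_apply, map_neg, neg_neg]
      rw [base, neg_neg]
  -- the continuous bilinear form
  set G := diracForm B γ₅ σ with hGdef
  set Fc : S →L[ℝ] S →L[ℝ] ℂ := LinearMap.toContinuousLinearMap
    ((LinearMap.toContinuousLinearMap : (S →ₗ[ℝ] ℂ) ≃ₗ[ℝ] (S →L[ℝ] ℂ)).toLinearMap ∘ₗ G)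
    with hFcdef
  have hFcapp : ∀ u v : S, Fc u v = B (γ₅ (σ.symm u)) v := by
    intro u v
    rw [hFcdef]
    simp [LinearMap.coe_toContinuousLinearMap', hGdef, diracForm_apply]
  set γupL : Fin (2*n) → S →L[ℝ] S :=
    fun μ => LinearMap.toContinuousLinearMap ((γup μ).restrictScalars ℝ) with hγupLdef
  have hγupLapp : ∀ (μ) (s : S), γupL μ s = γup μ s := by
    intro μ s; rw [hγupLdef]; simp [LinearMap.coe_toContinuousLinearMap']
  set ψ' := fderiv ℝ ψ x with hψ'
  have hder : ∀ μ, HasFDerivAt (j μ)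
      (C • ((Fc (ψ x)).comp ((γupL μ).comp ψ') + (Fc.comp ψ').flip (γupL μ (ψ x)))) x := by
    intro μ
    have hjfun : j μ = fun y => C * Fc (ψ y) (γupL μ (ψ y)) := by
      funext y; rw [hj μ y, hFcapp, hγupLapp]
    rw [hjfun]
    exact ((Fc.hasFDerivAt.comp x (hψ x).hasFDerivAt).clm_apply
      ((γupL μ).hasFDerivAt.comp x (hψ x).hasFDerivAt)).const_mul C
  have hframe : ∀ μ, fderiv ℝ (j μ) x (Pi.single μ 1)
      = C * (B (γ₅ (σ.symm (ψ x))) (γup μ (ψ' (Pi.single μ 1)))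
           + B (γ₅ (σ.symm (ψ' (Pi.single μ 1)))) (γup μ (ψ x))) := by
    intro μ
    rw [(hder μ).fderiv]
    simp only [ContinuousLinearMap.coe_smul', Pi.smul_apply, ContinuousLinearMap.add_apply,
      ContinuousLinearMap.comp_apply, ContinuousLinearMap.flip_apply, hFcapp, hγupLapp,
      smul_eq_mul, mul_add]
  rw [Finset.sum_congr rfl (fun μ _ => hframe μ)]
  -- algebra
  set w := ψ x with hw
  set d : Fin (2*n) → S := fun μ => ψ' (Pi.single μ 1) with hd
  set T : S := ∑ μ, γup μ (d μ) with hT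
  set z : Fin (2*n) → ℂ := fun μ => Complex.I * (e:ℂ) * (A μ x : ℂ) with hz
  have hTval : T = (m:ℂ) • w + ∑ μ, z μ • (γup μ w) := by
    have hD := hDirac x
    simp only [map_sub, map_smul, Finset.sum_sub_distrib] at hD
    rw [hT, hz]
    exact sub_eq_iff_eq_add.mp hD
  have hsum1 : ∑ μ, B (γ₅ (σ.symm w)) (γup μ (d μ)) = B (γ₅ (σ.symm w)) T := by
    rw [hT, map_sum]
  have hsum2 : ∑ μ, B (γ₅ (σ.symm (γup μ (d μ)))) w = B (γ₅ (σ.symm T)) w := by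
    rw [hT, map_sum, map_sum, map_sum, LinearMap.sum_apply]
  have hconj : ∀ (zc : ℂ) (u v : S),
      B (γ₅ (σ.symm (zc • u))) v = (starRingEnd ℂ) zc * B (γ₅ (σ.symm u)) v := by
    intro zc u v
    rw [map_smulₛₗ, map_smul, map_smul, LinearMap.smul_apply, smul_eq_mul]
  have hadd1 : ∀ u u' v : S,
      B (γ₅ (σ.symm (u + u'))) v = B (γ₅ (σ.symm u)) v + B (γ₅ (σ.symm u')) v := by
    intro u u' v; rw [map_add, map_add, map_add, LinearMap.add_apply]
  have hconjz : ∀ μ, (starRingEnd ℂ) (z μ) = -(z μ) := by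
    intro μ
    simp only [hz, map_mul, Complex.conj_I, Complex.conj_ofReal]
    ring
  have hstep : ∀ μ, B (γ₅ (σ.symm (z μ • γup μ w))) w = B (γ₅ (σ.symm w)) (z μ • γup μ w) := by
    intro μ
    rw [hconj, map_smul, smul_eq_mul, hkey μ w w, hconjz]
    ring
  -- expand both sides
  have hexp : B (γ₅ (σ.symm T)) w = B (γ₅ (σ.symm w)) T := by
    calc B (γ₅ (σ.symm T)) w
        = B (γ₅ (σ.symm ((m:ℂ) • w))) w
            + B (γ₅ (σ.symm (∑ μ, z μ • γup μ w))) w := by rw [hTval, hadd1]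
      _ = (m:ℂ) * B (γ₅ (σ.symm w)) w
            + ∑ μ, B (γ₅ (σ.symm (z μ • γup μ w))) w := by
          rw [hconj, Complex.conj_ofReal, map_sum, map_sum, map_sum, LinearMap.sum_apply]
      _ = (m:ℂ) * B (γ₅ (σ.symm w)) w
            + ∑ μ, B (γ₅ (σ.symm w)) (z μ • γup μ w) := by
          rw [Finset.sum_congr rfl fun μ _ => hstep μ]
      _ = B (γ₅ (σ.symm w)) ((m:ℂ) • w)
            + B (γ₅ (σ.symm w)) (∑ μ, z μ • γup μ w) := by
          rw [map_smul, smul_eq_mul, map_sum]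
      _ = B (γ₅ (σ.symm w)) T := by rw [hTval, map_add]
  -- finish
  have hflip : ∀ μ, B (γ₅ (σ.symm (ψ' (Pi.single μ 1)))) (γup μ w)
      = -(B (γ₅ (σ.symm (γup μ (d μ)))) w) := by
    intro μ
    rw [hkey μ (d μ) w]
    simp [hd]
  simp only [hflip]
  rw [← Finset.mul_sum, Finset.sum_add_distrib, Finset.sum_neg_distrib]
  have hfold : ∑ μ, B (γ₅ (σ.symm w)) (γup μ (ψ' (Pi.single μ 1)))
      = ∑ μ, B (γ₅ (σ.symm w)) (γup μ (d μ)) := rfl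
  rw [hfold, hsum1, hsum2, hexp]
  ring
end
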